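/- arXiv:1901.09453 — 3 statements merged into one kernel-verified Lean document; each statement's English description precedes it below -/
import Mathlib

section
/- Let X be a measurable space, let H be a set of measurable functions from X to the interval [0,1], and let D and D' be probability measures on X. Then for all h, h' ∈ H, |ε_D(h,h') − ε_{D'}(h,h')| ≤ sup_{g,g' ∈ H, t ∈ [0,1]} |D({x : |g(x) − g'(x)| > t}) − D'({x : |g(x) − g'(x)| > t})|. -/
open MeasureTheory Set

/-- The error of hypothesis `u` w.r.t. `v` under distribution `D`:
`ε_D(u,v) := E_{x∼D}[|u(x) − v(x)|]`. -/
noncomputable def errD {X : Type*} [MeasurableSpace X] (D : Measure X) (u v : X → ℝ) : ℝ :=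
  ∫ x, |u x - v x| ∂D

/-- The H̃-divergence between `D` and `D'` induced by the class `H`:
`sup_{g,g' ∈ H, t ∈ [0,1]} |D({x : |g(x) − g'(x)| > t}) − D'({x : |g(x) − g'(x)| > t})|`. -/
noncomputable def dTilde {X : Type*} [MeasurableSpace X] (H : Set (X → ℝ))
    (D D' : Measure X) : ℝ :=
  sSup {r : ℝ | ∃ g ∈ H, ∃ g' ∈ H, ∃ t ∈ Icc (0 : ℝ) 1,
    r = |(D {x | t < |g x - g' x|}).toReal - (D' {x | t < |g x - g' x|}).toReal|}

set_option maxHeartbeats 1000000 in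
theorem stmt_0 {X : Type*} [MeasurableSpace X]
    (D D' : Measure X) [IsProbabilityMeasure D] [IsProbabilityMeasure D']
    (H : Set (X → ℝ))
    (hmeas : ∀ h ∈ H, Measurable h)
    (hrange : ∀ h ∈ H, ∀ x, h x ∈ Icc (0 : ℝ) 1)
    (h h' : X → ℝ) (hh : h ∈ H) (hh' : h' ∈ H) :
    |errD D h h' - errD D' h h'| ≤ dTilde H D D' := by
  set F : X → ℝ := fun x => |h x - h' x| with hF
  have hFmeas : Measurable F := ((hmeas h hh).sub (hmeas h' hh')).abs
  have hFnn : ∀ x, 0 ≤ F x := fun x => abs_nonneg _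
  have hFle : ∀ x, F x ≤ 1 := by
    intro x
    have h1 := hrange h hh x
    have h2 := hrange h' hh' x
    rw [abs_le]
    constructor <;> simp at h1 h2 <;> linarith [h1.1, h1.2, h2.1, h2.2]
  have hint : ∀ (μ : Measure X) [IsProbabilityMeasure μ], Integrable F μ := by
    intro μ _
    refine (integrable_const (1 : ℝ)).mono' hFmeas.aestronglyMeasurable ?_
    filter_upwards with x
    rw [Real.norm_eq_abs, abs_of_nonneg (hFnn x)]
    exact hFle x
  -- layer cake
  have layer : ∀ (μ : Measure X) [IsProbabilityMeasure μ],
      ∫ x, F x ∂μ = ∫ t in Ioc (0:ℝ) 1, (μ {x | t < F x}).toReal := by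
    intro μ _
    rw [(hint μ).integral_eq_integral_meas_lt (Filter.Eventually.of_forall hFnn)]
    have hzero : ∀ t ∈ Ioi (0:ℝ) \ Ioc (0:ℝ) 1, (μ {x | t < F x}).toReal = 0 := by
      intro t ht
      simp only [mem_diff, mem_Ioi, mem_Ioc, not_and, not_le] at ht
      have hempty : {x | t < F x} = ∅ := by
        ext x
        simp only [mem_setOf_eq, mem_empty_iff_false, iff_false, not_lt]
        exact (hFle x).trans (le_of_lt (ht.2 ht.1))
      simp [hempty]
    exact setIntegral_eq_of_subset_of_forall_diff_eq_zero (μ := volume)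
      (f := fun t => (μ {x | t < F x}).toReal) measurableSet_Ioi Ioc_subset_Ioi_self hzero
  have e1 : errD D h h' = ∫ t in Ioc (0:ℝ) 1, (D {x | t < F x}).toReal := layer D
  have e2 : errD D' h h' = ∫ t in Ioc (0:ℝ) 1, (D' {x | t < F x}).toReal := layer D'
  set f : ℝ → ℝ := fun t => (D {x | t < F x}).toReal - (D' {x | t < F x}).toReal with hf
  have hanti : ∀ (μ : Measure X) [IsProbabilityMeasure μ],
      Antitone fun t : ℝ => (μ {x | t < F x}).toReal := by
    intro μ _ s t hst
    apply ENNReal.toReal_mono (measure_ne_top μ _)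
    exact measure_mono (fun x hx => lt_of_le_of_lt hst hx)
  have hfm : AEStronglyMeasurable f ((volume : Measure ℝ).restrict (Ioc 0 1)) := by
    exact (((hanti D).measurable.sub (hanti D').measurable).stronglyMeasurable).aestronglyMeasurable
  have hsub : ∀ t ∈ Ioc (0:ℝ) 1, ‖f t‖ ≤ dTilde H D D' := by
    intro t ht
    rw [Real.norm_eq_abs]
    apply le_csSup
    · refine ⟨2, ?_⟩
      rintro r ⟨g, _, g', _, s, _, rfl⟩
      have h1 : (D {x | s < |g x - g' x|}).toReal ≤ 1 := by
        have := prob_le_one (μ := D) (s := {x | s < |g x - g' x|})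
        simpa using ENNReal.toReal_mono (by simp) this
      have h2 : (D' {x | s < |g x - g' x|}).toReal ≤ 1 := by
        have := prob_le_one (μ := D') (s := {x | s < |g x - g' x|})
        simpa using ENNReal.toReal_mono (by simp) this
      have h3 : (0:ℝ) ≤ (D {x | s < |g x - g' x|}).toReal := ENNReal.toReal_nonneg
      have h4 : (0:ℝ) ≤ (D' {x | s < |g x - g' x|}).toReal := ENNReal.toReal_nonneg
      rw [abs_sub_le_iff]; constructor <;> linarith
    · exact ⟨h, hh, h', hh', t, ⟨le_of_lt ht.1, ht.2⟩, rfl⟩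
  have key : ‖∫ t in Ioc (0:ℝ) 1, f t‖ ≤ dTilde H D D' * ((volume : Measure ℝ) (Ioc (0:ℝ) 1)).toReal := by
    refine norm_setIntegral_le_of_norm_le_const ?_ hsub
    simp
  have hvol : ((volume : Measure ℝ) (Ioc (0:ℝ) 1)).toReal = 1 := by simp
  rw [hvol, mul_one, Real.norm_eq_abs] at key
  have hintD : IntegrableOn (fun t : ℝ => (D {x | t < F x}).toReal) (Ioc 0 1) := by
    refine (integrable_const (1:ℝ)).mono' (hanti D).measurable.aestronglyMeasurable ?_
    filter_upwards with t
    rw [Real.norm_eq_abs, abs_of_nonneg ENNReal.toReal_nonneg]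
    have := prob_le_one (μ := D) (s := {x | t < F x})
    simpa using ENNReal.toReal_mono (by simp) this
  have hintD' : IntegrableOn (fun t : ℝ => (D' {x | t < F x}).toReal) (Ioc 0 1) := by
    refine (integrable_const (1:ℝ)).mono' (hanti D').measurable.aestronglyMeasurable ?_
    filter_upwards with t
    rw [Real.norm_eq_abs, abs_of_nonneg ENNReal.toReal_nonneg]
    have := prob_le_one (μ := D') (s := {x | t < F x})
    simpa using ENNReal.toReal_mono (by simp) this
  have hsplit : ∫ t in Ioc (0:ℝ) 1, f t
      = (∫ t in Ioc (0:ℝ) 1, (D {x | t < F x}).toReal)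
        - ∫ t in Ioc (0:ℝ) 1, (D' {x | t < F x}).toReal :=
    integral_sub hintD hintD'
  rw [hsplit, ← e1, ← e2] at key
  exact key
end

section
/- Let X be a measurable space, D_S and D_T probability measures on X, and f_S, f_T : X → [0,1] measurable labeling functions. Let H be a set of measurable functions from X to [0,1] with f_S ∈ H and f_T ∈ H. Then for every h ∈ H: ε_{D_T}(h, f_T) ≤ ε_{D_S}(h, f_S) + d_{H̃}(D_S, D_T) + min{ E_{x∼D_S}[|f_S(x) − f_T(x)|], E_{x∼D_T}[|f_S(x) − f_T(x)|] }. -/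
open MeasureTheory Set

section Aux

variable {X : Type*} [MeasurableSpace X]

lemma absdiff_integrable (D : Measure X) [IsProbabilityMeasure D] {g g' : X → ℝ}
    (hg : Measurable g) (hg' : Measurable g')
    (hrg : ∀ x, g x ∈ Icc (0 : ℝ) 1) (hrg' : ∀ x, g' x ∈ Icc (0 : ℝ) 1) :
    Integrable (fun x => |g x - g' x|) D := by
  refine (integrable_const (1 : ℝ)).mono' ((hg.sub hg').abs.aestronglyMeasurable) ?_
  filter_upwards with x
  rw [Real.norm_eq_abs, abs_abs]
  have h1 := (hrg x).1; have h2 := (hrg x).2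
  have h3 := (hrg' x).1; have h4 := (hrg' x).2
  rw [abs_sub_le_iff]; constructor <;> linarith

lemma meas_toReal_antitone (D : Measure X) [IsFiniteMeasure D] (g g' : X → ℝ) :
    Antitone (fun t : ℝ => (D {x | t < |g x - g' x|}).toReal) := by
  intro s t hst
  exact ENNReal.toReal_mono (measure_ne_top _ _)
    (measure_mono (fun x hx => lt_of_le_of_lt hst hx))

lemma meas_toReal_integrableOn (D : Measure X) [IsProbabilityMeasure D] (g g' : X → ℝ) :
    IntegrableOn (fun t : ℝ => (D {x | t < |g x - g' x|}).toReal) (Ioc (0 : ℝ) 1) := by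
  have hmeas : Measurable (fun t : ℝ => (D {x | t < |g x - g' x|}).toReal) :=
    Measurable.ennreal_toReal (Antitone.measurable
      (fun _ _ hst => measure_mono (fun _ h => lt_of_le_of_lt hst h)))
  refine (integrable_const (1 : ℝ)).mono' hmeas.aestronglyMeasurable ?_
  filter_upwards with t
  rw [Real.norm_eq_abs, abs_of_nonneg ENNReal.toReal_nonneg]
  exact ENNReal.toReal_le_of_le_ofReal zero_le_one (by simp [prob_le_one])

lemma errD_layercake (D : Measure X) [IsProbabilityMeasure D] {g g' : X → ℝ}
    (hg : Measurable g) (hg' : Measurable g')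
    (hrg : ∀ x, g x ∈ Icc (0 : ℝ) 1) (hrg' : ∀ x, g' x ∈ Icc (0 : ℝ) 1) :
    errD D g g' = ∫ t in Ioc (0 : ℝ) 1, (D {x | t < |g x - g' x|}).toReal := by
  have hint := absdiff_integrable D hg hg' hrg hrg'
  have h1 : errD D g g' = ∫ t in Ioi (0 : ℝ), (D {x | t < |g x - g' x|}).toReal :=
    hint.integral_eq_integral_meas_lt (Filter.Eventually.of_forall fun x => abs_nonneg _)
  rw [h1]
  refine setIntegral_eq_of_subset_of_forall_diff_eq_zero measurableSet_Ioi
    Ioc_subset_Ioi_self (fun t ht => ?_)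
  simp only [mem_diff, mem_Ioi, mem_Ioc, not_and, not_le] at ht
  have hte : {x | t < |g x - g' x|} = ∅ := by
    ext x
    simp only [mem_setOf_eq, mem_empty_iff_false, iff_false, not_lt]
    have h1 := (hrg x).1; have h2 := (hrg x).2
    have h3 := (hrg' x).1; have h4 := (hrg' x).2
    have : |g x - g' x| ≤ 1 := by rw [abs_sub_le_iff]; constructor <;> linarith
    linarith [ht.2 ht.1]
  simp [hte]

lemma dTilde_bddAbove (H : Set (X → ℝ)) (D D' : Measure X)
    [IsProbabilityMeasure D] [IsProbabilityMeasure D'] :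
    BddAbove {r : ℝ | ∃ g ∈ H, ∃ g' ∈ H, ∃ t ∈ Icc (0 : ℝ) 1,
      r = |(D {x | t < |g x - g' x|}).toReal - (D' {x | t < |g x - g' x|}).toReal|} := by
  refine ⟨1, fun r hr => ?_⟩
  obtain ⟨g, -, g', -, t, -, rfl⟩ := hr
  have h1 : (D {x | t < |g x - g' x|}).toReal ≤ 1 :=
    ENNReal.toReal_le_of_le_ofReal zero_le_one (by simp [prob_le_one])
  have h2 : (D' {x | t < |g x - g' x|}).toReal ≤ 1 :=
    ENNReal.toReal_le_of_le_ofReal zero_le_one (by simp [prob_le_one])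
  rw [abs_sub_le_iff]
  constructor <;> [linarith [ENNReal.toReal_nonneg (a := D' {x | t < |g x - g' x|})];
    linarith [ENNReal.toReal_nonneg (a := D {x | t < |g x - g' x|})]]

lemma errD_le_errD_add_dTilde (DS DT : Measure X)
    [IsProbabilityMeasure DS] [IsProbabilityMeasure DT]
    (H : Set (X → ℝ)) (hmeas : ∀ h ∈ H, Measurable h)
    (hrange : ∀ h ∈ H, ∀ x, h x ∈ Icc (0 : ℝ) 1)
    {g g' : X → ℝ} (hg : g ∈ H) (hg' : g' ∈ H) :
    errD DT g g' ≤ errD DS g g' + dTilde H DS DT := by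
  rw [errD_layercake DT (hmeas g hg) (hmeas g' hg') (hrange g hg) (hrange g' hg'),
      errD_layercake DS (hmeas g hg) (hmeas g' hg') (hrange g hg) (hrange g' hg')]
  have key : ∫ t in Ioc (0 : ℝ) 1, (DT {x | t < |g x - g' x|}).toReal ≤
      ∫ t in Ioc (0 : ℝ) 1, ((DS {x | t < |g x - g' x|}).toReal + dTilde H DS DT) := by
    refine setIntegral_mono_on (meas_toReal_integrableOn DT g g')
      ((meas_toReal_integrableOn DS g g').add (integrableOn_const measure_Ioc_lt_top.ne))
      measurableSet_Ioc (fun t ht => ?_)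
    have hmem : |(DS {x | t < |g x - g' x|}).toReal - (DT {x | t < |g x - g' x|}).toReal| ≤
        dTilde H DS DT := by
      refine le_csSup (dTilde_bddAbove H DS DT) ?_
      exact ⟨g, hg, g', hg', t, ⟨le_of_lt ht.1, ht.2⟩, rfl⟩
    have := abs_le.mp hmem
    linarith [this.1]
  calc ∫ t in Ioc (0 : ℝ) 1, (DT {x | t < |g x - g' x|}).toReal
      ≤ ∫ t in Ioc (0 : ℝ) 1, ((DS {x | t < |g x - g' x|}).toReal + dTilde H DS DT) := key
    _ = (∫ t in Ioc (0 : ℝ) 1, (DS {x | t < |g x - g' x|}).toReal) + dTilde H DS DT := by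
        rw [integral_add (meas_toReal_integrableOn DS g g')
          (integrableOn_const measure_Ioc_lt_top.ne)]
        simp [Measure.restrict_apply, Real.volume_Ioc]

lemma errD_triangle (D : Measure X) [IsProbabilityMeasure D] {u v w : X → ℝ}
    (hu : Measurable u) (hv : Measurable v) (hw : Measurable w)
    (hru : ∀ x, u x ∈ Icc (0 : ℝ) 1) (hrv : ∀ x, v x ∈ Icc (0 : ℝ) 1)
    (hrw : ∀ x, w x ∈ Icc (0 : ℝ) 1) :
    errD D u w ≤ errD D u v + errD D v w := by
  unfold errD
  rw [← integral_add (absdiff_integrable D hu hv hru hrv)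
    (absdiff_integrable D hv hw hrv hrw)]
  refine integral_mono (absdiff_integrable D hu hw hru hrw)
    ((absdiff_integrable D hu hv hru hrv).add (absdiff_integrable D hv hw hrv hrw))
    (fun x => ?_)
  exact abs_sub_le _ _ _

end Aux

theorem stmt_2 {X : Type*} [MeasurableSpace X]
    (DS DT : Measure X) [IsProbabilityMeasure DS] [IsProbabilityMeasure DT]
    (fS fT : X → ℝ)
    (H : Set (X → ℝ))
    (hmeas : ∀ h ∈ H, Measurable h)
    (hrange : ∀ h ∈ H, ∀ x, h x ∈ Icc (0 : ℝ) 1)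
    (hfS : fS ∈ H) (hfT : fT ∈ H) :
    ∀ h ∈ H,
      errD DT h fT ≤ errD DS h fS + dTilde H DS DT +
        min (∫ x, |fS x - fT x| ∂DS) (∫ x, |fS x - fT x| ∂DT) := by
  intro h hh
  have hSmin : errD DS fS fT = ∫ x, |fS x - fT x| ∂DS := rfl
  have hTmin : errD DT fS fT = ∫ x, |fS x - fT x| ∂DT := rfl
  rcases min_cases (∫ x, |fS x - fT x| ∂DS) (∫ x, |fS x - fT x| ∂DT) with ⟨hm, _⟩ | ⟨hm, _⟩
  · -- min is the DS term
    rw [hm]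
    have h1 : errD DT h fT ≤ errD DS h fT + dTilde H DS DT :=
      errD_le_errD_add_dTilde DS DT H hmeas hrange hh hfT
    have h2 : errD DS h fT ≤ errD DS h fS + errD DS fS fT :=
      errD_triangle DS (hmeas h hh) (hmeas fS hfS) (hmeas fT hfT)
        (hrange h hh) (hrange fS hfS) (hrange fT hfT)
    rw [← hSmin]; linarith
  · -- min is the DT term
    rw [hm]
    have h1 : errD DT h fT ≤ errD DT h fS + errD DT fS fT :=
      errD_triangle DT (hmeas h hh) (hmeas fS hfS) (hmeas fT hfT)
        (hrange h hh) (hrange fS hfS) (hrange fT hfT)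
    have h2 : errD DT h fS ≤ errD DS h fS + dTilde H DS DT :=
      errD_le_errD_add_dTilde DS DT H hmeas hrange hh hfS
    rw [← hTmin]; linarith
end

section
/- Let X be a measurable space, D a probability measure on X, and H̃ a countable nonempty set of measurable functions from X to {0,1}. Fix n ≥ 1 and δ ∈ (0,1). Then with probability at least 1 − δ over an i.i.d. sample S = (x_1, …, x_n) drawn from D^n, the following holds simultaneously for all h ∈ H̃: E_{x∼D}[h(x)] ≤ (1/n)·Σ_{i=1}^n h(x_i) + 2·Rad_S(H̃) + 3·√(log(2/δ)/(2n)). -/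
open MeasureTheory Set

lemma two_point (p : ℝ) (hp0 : 0 ≤ p) (hp1 : p ≤ 1) (h : ℝ) :
    p * Real.exp (-(1-p)*h) + (1-p) * Real.exp (p*h) ≤ Real.exp (h^2/8) := by
  -- define q t = p + (1-p) * exp t
  set q : ℝ → ℝ := fun t => p + (1-p) * Real.exp t with hq
  rcases eq_or_lt_of_le hp1 with h1 | hp1'
  · rw [h1]
    norm_num
    positivity
  have hqpos : ∀ t, 0 < q t := by
    intro t
    have h1 : 0 < (1-p) * Real.exp t := by
      have := Real.exp_pos t
      nlinarith
    show 0 < p + (1-p) * Real.exp t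
    linarith
  -- g t := t^2/8 + (1-p)*t - log (q t), show 0 ≤ g h
  set g : ℝ → ℝ := fun t => t^2/8 + (1-p)*t - Real.log (q t) with hg
  set g' : ℝ → ℝ := fun t => t/4 + (1-p) - (1-p)*Real.exp t / q t with hg'
  have hd : ∀ t, HasDerivAt g (g' t) t := by
    intro t
    have h1 : HasDerivAt q ((1-p) * Real.exp t) t := by
      exact ((Real.hasDerivAt_exp t).const_mul (1-p)).const_add p
    have h2 : HasDerivAt (fun t => Real.log (q t)) ((1-p)*Real.exp t / q t) t :=
      h1.log (hqpos t).ne'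
    have h3 : HasDerivAt (fun t : ℝ => t^2/8 + (1-p)*t) (t/4 + (1-p)) t := by
      have := ((hasDerivAt_pow 2 t).div_const 8).add ((hasDerivAt_id t).const_mul (1-p))
      refine this.congr_deriv ?_
      push_cast
      ring
    exact h3.sub h2
  have hd' : ∀ t, HasDerivAt g' (1/4 - p*(1-p)*Real.exp t / (q t)^2) t := by
    intro t
    have h1 : HasDerivAt q ((1-p) * Real.exp t) t := by
      exact ((Real.hasDerivAt_exp t).const_mul (1-p)).const_add p
    have h2 : HasDerivAt (fun t => (1-p)*Real.exp t) ((1-p)*Real.exp t) t := by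
      simpa using (Real.hasDerivAt_exp t).const_mul (1-p)
    have h3 : HasDerivAt (fun t => (1-p)*Real.exp t / q t)
        (((1-p)*Real.exp t * q t - (1-p)*Real.exp t * ((1-p)*Real.exp t)) / (q t)^2) t :=
      h2.div h1 (hqpos t).ne'
    have h4 : HasDerivAt (fun t : ℝ => t/4 + (1-p)) (1/4) t := by
      simpa using (hasDerivAt_id t).div_const 4 |>.add_const (1-p)
    have := h4.sub h3
    refine this.congr_deriv ?_
    have hqt := (hqpos t).ne'
    field_simp
    ring
  have hg'nonneg : ∀ t, 0 ≤ 1/4 - p*(1-p)*Real.exp t / (q t)^2 := by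
    intro t
    have hqt := hqpos t
    rw [sub_nonneg, div_le_iff₀ (by positivity)]
    have hamgm : 4 * (p * ((1-p)*Real.exp t)) ≤ (p + (1-p)*Real.exp t)^2 := by
      nlinarith [sq_nonneg (p - (1-p)*Real.exp t)]
    calc p*(1-p)*Real.exp t = (4 * (p * ((1-p)*Real.exp t))) * (1/4) := by ring
      _ ≤ (p + (1-p)*Real.exp t)^2 * (1/4) := by linarith [hamgm]
      _ = 1/4 * (q t)^2 := by rw [hq]; ring
  -- g' is monotone
  have hg'mono : Monotone g' := by
    have : ∀ t, 0 ≤ deriv g' t := fun t => (hd' t).deriv ▸ hg'nonneg t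
    exact monotone_of_deriv_nonneg (fun t => (hd' t).differentiableAt) this
  have hg'0 : g' 0 = 0 := by simp [hg', hq]
  have hgd : Differentiable ℝ g := fun t => (hd t).differentiableAt
  have hg0 : g 0 = 0 := by simp [hg, hq]
  have key : 0 ≤ g h := by
    rcases le_total 0 h with hh | hh
    · have : MonotoneOn g (Ici 0) := by
        apply monotoneOn_of_deriv_nonneg (convex_Ici 0) hgd.continuous.continuousOn
          (hgd.differentiableOn)
        intro t ht
        rw [(hd t).deriv]
        have : (0:ℝ) ≤ t := le_of_lt (by simpa using ht)
        calc (0:ℝ) = g' 0 := hg'0.symm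
          _ ≤ g' t := hg'mono this
      have := this (self_mem_Ici) (by exact hh) hh
      linarith [hg0 ▸ this]
    · have : AntitoneOn g (Iic 0) := by
        apply antitoneOn_of_deriv_nonpos (convex_Iic 0) hgd.continuous.continuousOn
          (hgd.differentiableOn)
        intro t ht
        rw [(hd t).deriv]
        have ht' : t ≤ 0 := le_of_lt (by simpa using ht)
        calc g' t ≤ g' 0 := hg'mono ht'
          _ = 0 := hg'0
      have := this (by exact hh : h ∈ Iic 0) self_mem_Iic hh
      linarith [hg0 ▸ this]
  -- convert: LHS = exp (-(1-p)h) * q h = exp (log (q h) - (1-p) h)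
  have hexp : Real.exp (-(1-p)*h) * Real.exp h = Real.exp (p*h) := by
    rw [← Real.exp_add]; congr 1; ring
  have hlhs : p * Real.exp (-(1-p)*h) + (1-p) * Real.exp (p*h)
      = Real.exp (-(1-p)*h) * q h := by
    show _ = Real.exp (-(1-p)*h) * (p + (1-p) * Real.exp h)
    rw [← hexp]
    ring
  have hlhs2 : Real.exp (-(1-p)*h) * q h
      = Real.exp (Real.log (q h) + (-(1-p)*h)) := by
    rw [Real.exp_add, Real.exp_log (hqpos h)]; ring
  rw [hlhs, hlhs2]
  apply Real.exp_le_exp.2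
  rw [show Real.log (q h) + (-(1-p)*h) = Real.log (q h) - (1-p)*h by ring]
  have heq : h^2/8 - g h = Real.log (q h) - (1-p)*h := by simp only [hg]; ring
  rw [← heq]
  exact sub_le_self _ key


lemma integrable_of_bdd_ {α : Type*} [MeasurableSpace α] {μ : Measure α} [IsFiniteMeasure μ]
    {f : α → ℝ} (hm : AEStronglyMeasurable f μ) (C : ℝ) (h : ∀ x, |f x| ≤ C) :
    Integrable f μ :=
  ⟨hm, HasFiniteIntegral.of_bounded (C := C) (Filter.Eventually.of_forall (by simpa using h))⟩

lemma hoeffding_lemma {α : Type*} [MeasurableSpace α] (μ : Measure α) [IsProbabilityMeasure μ]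
    {f : α → ℝ} (hf : Measurable f) (a b l : ℝ) (hab : ∀ x, f x ∈ Set.Icc a b)
    (h0 : ∫ x, f x ∂μ = 0) :
    ∫ x, Real.exp (l * f x) ∂μ ≤ Real.exp (l^2 * (b-a)^2 / 8) := by
  have hne : Nonempty α := by
    by_contra h
    rw [not_nonempty_iff] at h
    have : μ Set.univ = 1 := measure_univ
    simp [Set.univ_eq_empty_iff.2 h] at this
  have hC : ∀ x, |f x| ≤ max |a| |b| := by
    intro x
    rcases hab x with ⟨h1, h2⟩
    rw [abs_le]
    constructor
    · have : -|a| ≤ a := neg_abs_le a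
      have : -(max |a| |b|) ≤ -|a| := neg_le_neg (le_max_left _ _)
      linarith [neg_abs_le a]
    · exact le_trans h2 (le_trans (le_abs_self b) (le_max_right _ _))
  have hfint : Integrable f μ := integrable_of_bdd_ hf.aestronglyMeasurable _ hC
  have hab' : a ≤ b :=
    le_trans (hab (Classical.arbitrary α)).1 (hab (Classical.arbitrary α)).2
  -- a ≤ 0 ≤ b
  have ha0 : a ≤ 0 := by
    have : ∫ _x, a ∂μ ≤ ∫ x, f x ∂μ :=
      integral_mono (integrable_const a) hfint (fun x => (hab x).1)
    simpa [h0] using this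
  have hb0 : 0 ≤ b := by
    have : ∫ x, f x ∂μ ≤ ∫ _x, b ∂μ :=
      integral_mono hfint (integrable_const b) (fun x => (hab x).2)
    simpa [h0] using this
  rcases eq_or_lt_of_le hab' with heq | hlt
  · -- a = b ⇒ a = b = 0, f = 0
    have hfa : ∀ x, f x = a := fun x => le_antisymm (heq ▸ (hab x).2) (hab x).1
    have ha : a = 0 := le_antisymm ha0 (heq ▸ hb0)
    have : ∀ x, Real.exp (l * f x) = 1 := by intro x; rw [hfa x, ha]; simp
    rw [integral_congr_ae (Filter.Eventually.of_forall this)]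
    have h1 : (1:ℝ) ≤ Real.exp (l^2*(b-a)^2/8) := Real.one_le_exp (by positivity)
    simpa using h1
  · -- convexity bound pointwise
    have hba : 0 < b - a := by linarith
    have hpt : ∀ x, Real.exp (l * f x) ≤
        (b - f x)/(b-a) * Real.exp (l*a) + (f x - a)/(b-a) * Real.exp (l*b) := by
      intro x
      rcases hab x with ⟨h1, h2⟩
      have hw1 : 0 ≤ (b - f x)/(b-a) := by
        apply div_nonneg _ (le_of_lt hba); linarith
      have hw2 : 0 ≤ (f x - a)/(b-a) := by
        apply div_nonneg _ (le_of_lt hba); linarith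
      have hw : (b - f x)/(b-a) + (f x - a)/(b-a) = 1 := by
        field_simp
        ring
      have := convexOn_exp.2 (Set.mem_univ (l*a)) (Set.mem_univ (l*b)) hw1 hw2 hw
      refine le_trans (le_of_eq ?_) this
      congr 1
      simp only [smul_eq_mul]
      field_simp
      ring
    have hint2 : Integrable (fun x => (b - f x)/(b-a) * Real.exp (l*a)
        + (f x - a)/(b-a) * Real.exp (l*b)) μ := by
      apply Integrable.add
      · exact (((integrable_const b).sub hfint).div_const _).mul_const _
      · exact ((hfint.sub (integrable_const a)).div_const _).mul_const _
    have hint1 : Integrable (fun x => Real.exp (l * f x)) μ := by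
      apply integrable_of_bdd_ (Real.measurable_exp.comp (hf.const_mul l)).aestronglyMeasurable
        (Real.exp (|l| * max |a| |b|))
      intro x
      show |Real.exp (l * f x)| ≤ _
      rw [abs_of_pos (Real.exp_pos _), Real.exp_le_exp]
      calc l * f x ≤ |l * f x| := le_abs_self _
        _ = |l| * |f x| := abs_mul _ _
        _ ≤ |l| * max |a| |b| := by
            apply mul_le_mul_of_nonneg_left (hC x) (abs_nonneg l)
    calc ∫ x, Real.exp (l * f x) ∂μ
        ≤ ∫ x, ((b - f x)/(b-a) * Real.exp (l*a) + (f x - a)/(b-a) * Real.exp (l*b)) ∂μ :=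
          integral_mono hint1 hint2 hpt
      _ = b/(b-a) * Real.exp (l*a) + (-a)/(b-a) * Real.exp (l*b) := by
          have hrw : ∀ x : α, (b - f x)/(b-a) * Real.exp (l*a) + (f x - a)/(b-a) * Real.exp (l*b)
              = (Real.exp (l*b)/(b-a) - Real.exp (l*a)/(b-a)) * f x
                + (b/(b-a) * Real.exp (l*a) + (-a)/(b-a) * Real.exp (l*b)) := by
            intro x; field_simp; ring
          rw [integral_congr_ae (Filter.Eventually.of_forall hrw)]
          rw [integral_add (hfint.const_mul _) (integrable_const _), integral_const_mul, h0,
            integral_const]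
          simp
      _ ≤ Real.exp (l^2 * (b-a)^2/8) := by
          have hp0 : 0 ≤ b/(b-a) := by positivity
          have hp1 : b/(b-a) ≤ 1 := by
            rw [div_le_one hba]; linarith
          have h1p : 1 - b/(b-a) = (-a)/(b-a) := by field_simp; ring
          have key := two_point (b/(b-a)) hp0 hp1 (l*(b-a))
          rw [h1p] at key
          have e1 : -((-a)/(b-a)) * (l*(b-a)) = l * a := by field_simp
          have e2 : b/(b-a) * (l*(b-a)) = l * b := by field_simp
          rw [e1, e2] at key
          have e3 : (l*(b-a))^2/8 = l^2*(b-a)^2/8 := by ring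
          rw [e3] at key
          exact key


theorem mcdiarmid_mgf {X : Type*} [MeasurableSpace X] (D : Measure X) [IsProbabilityMeasure D]
    (c l M : ℝ) (hM : 0 ≤ M) :
    ∀ (m : ℕ) (f : (Fin m → X) → ℝ), Measurable f → (∀ ω, |f ω| ≤ M) →
    (∀ (i : Fin m) (ω : Fin m → X) (x y : X),
      f (Function.update ω i x) - f (Function.update ω i y) ≤ c) →
    ∫ ω, Real.exp (l * (f ω - ∫ ω', f ω' ∂(Measure.pi fun _ : Fin m => D)))
        ∂(Measure.pi fun _ : Fin m => D)
      ≤ Real.exp (m * (l^2 * c^2 / 8)) := by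
  have hXne : Nonempty X := by
    by_contra h
    rw [not_nonempty_iff] at h
    have : D Set.univ = 1 := measure_univ
    simp [Set.univ_eq_empty_iff.2 h] at this
  intro m
  induction m with
  | zero =>
    intro f hf hbM hbd
    have hconst : ∀ ω : Fin 0 → X, f ω = f default := fun ω => congrArg f (Subsingleton.elim _ _)
    have h1 : ∫ ω', f ω' ∂(Measure.pi fun _ : Fin 0 => D) = f default := by
      rw [integral_congr_ae (Filter.Eventually.of_forall hconst), integral_const]
      simp
    have h2 : ∀ ω : Fin 0 → X, Real.exp (l * (f ω - ∫ ω', f ω' ∂(Measure.pi fun _ : Fin 0 => D))) = 1 := by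
      intro ω; rw [h1, hconst ω]; simp
    rw [integral_congr_ae (Filter.Eventually.of_forall h2), integral_const]
    simp
  | succ m IH =>
    intro f hf hbM hbd
    set ν' : Measure (Fin m → X) := Measure.pi fun _ : Fin m => D with hν'
    set Pm : Measure (Fin (m+1) → X) := Measure.pi fun _ : Fin (m+1) => D with hPm
    set e := MeasurableEquiv.piFinSuccAbove (fun _ : Fin (m+1) => X) 0 with he
    have hmp0 : MeasurePreserving (⇑e) Pm (D.prod ν') :=
      measurePreserving_piFinSuccAbove (fun _ : Fin (m+1) => D) 0
    have hmp : MeasurePreserving (⇑e.symm) (D.prod ν') Pm := hmp0.symm e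
    have hsymm : ∀ z : X × (Fin m → X), e.symm z = Fin.cons z.1 z.2 := by
      intro z
      show Fin.insertNth (α := fun _ : Fin (m+1) => X) 0 z.1 z.2
          = Fin.cons (α := fun _ : Fin (m+1) => X) z.1 z.2
      exact Fin.insertNth_zero' (β := X) z.1 z.2
    have hconsm : Measurable (fun z : X × (Fin m → X) => f (Fin.cons z.1 z.2)) := by
      have : Measurable (fun z : X × (Fin m → X) => f (e.symm z)) :=
        hf.comp e.symm.measurable
      simpa only [hsymm] using this
    have hconsy : ∀ y : Fin m → X, Measurable (fun x : X => f (Fin.cons x y)) := by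
      intro y
      exact hconsm.comp (measurable_id.prodMk measurable_const)
    have hconsint : ∀ y : Fin m → X, Integrable (fun x : X => f (Fin.cons x y)) D :=
      fun y => integrable_of_bdd_ (hconsy y).aestronglyMeasurable M (fun x => hbM _)
    -- g y = ∫ x, f (cons x y) dD
    set g : (Fin m → X) → ℝ := fun y => ∫ x, f (Fin.cons x y) ∂D with hg
    have hgm : Measurable g := by
      have h1 : StronglyMeasurable (fun w : (Fin m → X) × X => f (Fin.cons w.2 w.1)) := by
        apply Measurable.stronglyMeasurable
        exact hconsm.comp (measurable_snd.prodMk measurable_fst)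
      exact h1.integral_prod_right'.measurable
    have hgM : ∀ y, |g y| ≤ M := by
      intro y
      have := norm_integral_le_of_norm_le_const (μ := D)
        (f := fun x => f (Fin.cons x y)) (C := M)
        (Filter.Eventually.of_forall (fun x => by simpa using hbM (Fin.cons x y)))
      simpa using this
    have hgbd : ∀ (i : Fin m) (y : Fin m → X) (v w : X),
        g (Function.update y i v) - g (Function.update y i w) ≤ c := by
      intro i y v w
      have h1 : ∀ x, f (Fin.cons x (Function.update y i v)) - f (Fin.cons x (Function.update y i w)) ≤ c := by
        intro x
        rw [Fin.cons_update, Fin.cons_update]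
        exact hbd i.succ (Fin.cons x y) v w
      have hint1 : Integrable (fun x => f (Fin.cons x (Function.update y i v))) D := hconsint _
      have hint2 : Integrable (fun x => f (Fin.cons x (Function.update y i w))) D := hconsint _
      calc g (Function.update y i v) - g (Function.update y i w)
          = ∫ x, (f (Fin.cons x (Function.update y i v)) - f (Fin.cons x (Function.update y i w))) ∂D := by
            rw [integral_sub hint1 hint2]
        _ ≤ ∫ _x, c ∂D := integral_mono (hint1.sub hint2) (integrable_const c) h1
        _ = c := by simp
    have hc0 : 0 ≤ c := by
      have := hbd 0 (Classical.arbitrary _) (Classical.arbitrary X) (Classical.arbitrary X)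
      simpa using this
    set I : ℝ := ∫ ω', f ω' ∂Pm with hI
    -- I = ∫ g dν'
    have hIg : I = ∫ y, g y ∂ν' := by
      rw [hI, ← hmp.integral_comp e.symm.measurableEmbedding f]
      have : ∀ z : X × (Fin m → X), f (e.symm z) = f (Fin.cons z.1 z.2) := fun z => by rw [hsymm]
      rw [integral_congr_ae (Filter.Eventually.of_forall this)]
      rw [integral_prod_symm _ (integrable_of_bdd_ hconsm.aestronglyMeasurable M (fun z => hbM _))]
    -- main integral = ∫ y, H y
    set H : (Fin m → X) → ℝ := fun y => ∫ x, Real.exp (l * (f (Fin.cons x y) - I)) ∂D with hH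
    have hintmain : Integrable (fun z : X × (Fin m → X) => Real.exp (l * (f (Fin.cons z.1 z.2) - I))) (D.prod ν') := by
      apply integrable_of_bdd_ (Real.measurable_exp.comp ((hconsm.sub measurable_const).const_mul l)).aestronglyMeasurable
        (Real.exp (|l| * (M + M)))
      intro z
      show |Real.exp (l * (f (Fin.cons z.1 z.2) - I))| ≤ _
      rw [abs_of_pos (Real.exp_pos _), Real.exp_le_exp]
      have h1 : |f (Fin.cons z.1 z.2) - I| ≤ M + M := by
        have h2 : |I| ≤ M := by
          rw [hI]
          have := norm_integral_le_of_norm_le_const (μ := Pm) (f := f) (C := M)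
            (Filter.Eventually.of_forall (fun ω => by simpa using hbM ω))
          simpa using this
        have := abs_sub (f (Fin.cons z.1 z.2)) I
        calc |f (Fin.cons z.1 z.2) - I| ≤ |f (Fin.cons z.1 z.2)| + |I| := abs_sub _ _
          _ ≤ M + M := add_le_add (hbM _) h2
      calc l * (f (Fin.cons z.1 z.2) - I) ≤ |l * (f (Fin.cons z.1 z.2) - I)| := le_abs_self _
        _ = |l| * |f (Fin.cons z.1 z.2) - I| := abs_mul _ _
        _ ≤ |l| * (M + M) := mul_le_mul_of_nonneg_left h1 (abs_nonneg l)
    have hmain : ∫ ω, Real.exp (l * (f ω - I)) ∂Pm = ∫ y, H y ∂ν' := by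
      rw [← hmp.integral_comp e.symm.measurableEmbedding]
      have : ∀ z : X × (Fin m → X), Real.exp (l * (f (e.symm z) - I)) = Real.exp (l * (f (Fin.cons z.1 z.2) - I)) :=
        fun z => by rw [hsymm]
      rw [integral_congr_ae (Filter.Eventually.of_forall this)]
      rw [integral_prod_symm _ hintmain]
    -- bound H y
    have hHbound : ∀ y, H y ≤ Real.exp (l^2 * c^2 / 8) * Real.exp (l * (g y - I)) := by
      intro y
      set φ : X → ℝ := fun x => f (Fin.cons x y) - g y with hφ
      have hφm : Measurable φ := (hconsy y).sub measurable_const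
      have hφint : Integrable φ D :=
        integrable_of_bdd_ hφm.aestronglyMeasurable (M + M)
          (fun x => by
            calc |φ x| ≤ |f (Fin.cons x y)| + |g y| := abs_sub _ _
              _ ≤ M + M := add_le_add (hbM _) (hgM y))
      have hφ0 : ∫ x, φ x ∂D = 0 := by
        rw [hφ]
        simp only
        rw [integral_sub (hconsint y) (integrable_const _)]
        simp [hg]
      set aa : ℝ := sInf (Set.range φ) with haa
      have hbdb : BddBelow (Set.range φ) := by
        refine ⟨-(M+M), ?_⟩
        rintro v ⟨x, rfl⟩
        have : |φ x| ≤ M + M := by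
          calc |φ x| ≤ |f (Fin.cons x y)| + |g y| := abs_sub _ _
            _ ≤ M + M := add_le_add (hbM _) (hgM y)
        linarith [abs_le.1 this |>.1]
      have hlow : ∀ x, aa ≤ φ x := fun x => csInf_le hbdb (mem_range_self x)
      have hup : ∀ x, φ x ≤ aa + c := by
        intro x
        have h1 : φ x - c ≤ aa := by
          apply le_csInf (Set.range_nonempty φ)
          rintro v ⟨x', rfl⟩
          have h2 : f (Fin.cons x y) - f (Fin.cons x' y) ≤ c := by
            have := hbd 0 (Fin.cons x' y) x x'
            rwa [Fin.update_cons_zero, Fin.update_cons_zero] at this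
          show φ x - c ≤ φ x'
          rw [hφ]
          simp only
          linarith
        linarith
      have hhoef := hoeffding_lemma D hφm aa (aa + c) l (fun x => ⟨hlow x, hup x⟩) hφ0
      have hpow : l^2 * ((aa + c) - aa)^2 / 8 = l^2 * c^2 / 8 := by ring_nf
      rw [hpow] at hhoef
      -- H y = (∫ exp (l φ)) * exp (l (g y - I))
      have hfact : ∀ x, Real.exp (l * (f (Fin.cons x y) - I)) = Real.exp (l * φ x) * Real.exp (l * (g y - I)) := by
        intro x
        rw [← Real.exp_add]
        congr 1
        rw [hφ]
        simp only
        ring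
      have : H y = (∫ x, Real.exp (l * φ x) ∂D) * Real.exp (l * (g y - I)) := by
        rw [hH]
        simp only
        rw [integral_congr_ae (Filter.Eventually.of_forall hfact), integral_mul_const]
      rw [this]
      apply mul_le_mul_of_nonneg_right hhoef (le_of_lt (Real.exp_pos _))
    -- integrate
    have hHm : Measurable H := by
      have h1 : StronglyMeasurable (fun w : (Fin m → X) × X => Real.exp (l * (f (Fin.cons w.2 w.1) - I))) := by
        apply Measurable.stronglyMeasurable
        exact Real.measurable_exp.comp (((hconsm.comp (measurable_snd.prodMk measurable_fst)).sub measurable_const).const_mul l)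
      exact h1.integral_prod_right'.measurable
    have hHint : Integrable H ν' := by
      apply integrable_of_bdd_ hHm.aestronglyMeasurable (Real.exp (|l| * (M + M)))
      intro y
      have := norm_integral_le_of_norm_le_const (μ := D)
        (f := fun x => Real.exp (l * (f (Fin.cons x y) - I))) (C := Real.exp (|l| * (M + M)))
        (Filter.Eventually.of_forall (fun x => ?_))
      · simpa using this
      · rw [Real.norm_eq_abs, abs_of_pos (Real.exp_pos _), Real.exp_le_exp]
        have h2 : |I| ≤ M := by
          rw [hI]
          have := norm_integral_le_of_norm_le_const (μ := Pm) (f := f) (C := M)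
            (Filter.Eventually.of_forall (fun ω => by simpa using hbM ω))
          simpa using this
        have h1 : |f (Fin.cons x y) - I| ≤ M + M :=
          calc |f (Fin.cons x y) - I| ≤ |f (Fin.cons x y)| + |I| := abs_sub _ _
            _ ≤ M + M := add_le_add (hbM _) h2
        calc l * (f (Fin.cons x y) - I) ≤ |l * (f (Fin.cons x y) - I)| := le_abs_self _
          _ = |l| * |f (Fin.cons x y) - I| := abs_mul _ _
          _ ≤ |l| * (M + M) := mul_le_mul_of_nonneg_left h1 (abs_nonneg l)
    have hgexp_int : Integrable (fun y => Real.exp (l * (g y - I))) ν' := by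
      apply integrable_of_bdd_ (Real.measurable_exp.comp ((hgm.sub measurable_const).const_mul l)).aestronglyMeasurable
        (Real.exp (|l| * (M + M)))
      intro y
      show |Real.exp (l * (g y - I))| ≤ _
      rw [abs_of_pos (Real.exp_pos _), Real.exp_le_exp]
      have h2 : |I| ≤ M := by
        rw [hI]
        have := norm_integral_le_of_norm_le_const (μ := Pm) (f := f) (C := M)
          (Filter.Eventually.of_forall (fun ω => by simpa using hbM ω))
        simpa using this
      have h1 : |g y - I| ≤ M + M :=
        calc |g y - I| ≤ |g y| + |I| := abs_sub _ _
          _ ≤ M + M := add_le_add (hgM y) h2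
      calc l * (g y - I) ≤ |l * (g y - I)| := le_abs_self _
        _ = |l| * |g y - I| := abs_mul _ _
        _ ≤ |l| * (M + M) := mul_le_mul_of_nonneg_left h1 (abs_nonneg l)
    have hIH := IH g hgm hgM hgbd
    rw [← hIg] at hIH
    calc ∫ ω, Real.exp (l * (f ω - I)) ∂Pm = ∫ y, H y ∂ν' := hmain
      _ ≤ ∫ y, Real.exp (l^2 * c^2/8) * Real.exp (l * (g y - I)) ∂ν' :=
          integral_mono hHint (hgexp_int.const_mul _) hHbound
      _ = Real.exp (l^2*c^2/8) * ∫ y, Real.exp (l * (g y - I)) ∂ν' := integral_const_mul _ _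
      _ ≤ Real.exp (l^2*c^2/8) * Real.exp (m * (l^2*c^2/8)) := by
          apply mul_le_mul_of_nonneg_left _ (le_of_lt (Real.exp_pos _))
          exact hIH
      _ = Real.exp ((m+1 : ℕ) * (l^2*c^2/8)) := by
          rw [← Real.exp_add]
          congr 1
          push_cast
          ring


lemma mcdiarmid_tail {X : Type*} [MeasurableSpace X] (D : Measure X) [IsProbabilityMeasure D]
    (m : ℕ) (hm : 1 ≤ m) (f : (Fin m → X) → ℝ) (hf : Measurable f)
    (M : ℝ) (hM : 0 ≤ M) (hbM : ∀ ω, |f ω| ≤ M)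
    (c : ℝ) (hc : 0 < c)
    (hbd : ∀ (i : Fin m) (ω : Fin m → X) (x y : X),
      f (Function.update ω i x) - f (Function.update ω i y) ≤ c)
    (t : ℝ) (ht : 0 < t) :
    (Measure.pi fun _ : Fin m => D) {ω | t ≤ f ω - ∫ ω', f ω' ∂(Measure.pi fun _ : Fin m => D)}
      ≤ ENNReal.ofReal (Real.exp (-2*t^2/(m*c^2))) := by
  set Pm : Measure (Fin m → X) := Measure.pi fun _ : Fin m => D with hPm
  set I : ℝ := ∫ ω', f ω' ∂Pm with hI
  have hm0 : (0:ℝ) < m := by exact_mod_cast Nat.lt_of_lt_of_le Nat.zero_lt_one hm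
  set l : ℝ := 4*t/(m*c^2) with hl
  have hl0 : 0 < l := by positivity
  have hmgf := mcdiarmid_mgf D c l M hM m f hf hbM hbd
  rw [← hPm, ← hI] at hmgf
  set Z : (Fin m → X) → ℝ := fun ω => Real.exp (l * (f ω - I)) with hZ
  have hZm : Measurable Z := Real.measurable_exp.comp ((hf.sub measurable_const).const_mul l)
  have hIM : |I| ≤ M := by
    rw [hI]
    have := norm_integral_le_of_norm_le_const (μ := Pm) (f := f) (C := M)
      (Filter.Eventually.of_forall (fun ω => by simpa using hbM ω))
    simpa using this
  have hZint : Integrable Z Pm := by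
    apply integrable_of_bdd_ hZm.aestronglyMeasurable (Real.exp (|l| * (M+M)))
    intro ω
    rw [hZ]
    show |Real.exp (l * (f ω - I))| ≤ _
    rw [abs_of_pos (Real.exp_pos _), Real.exp_le_exp]
    calc l * (f ω - I) ≤ |l * (f ω - I)| := le_abs_self _
      _ = |l| * |f ω - I| := abs_mul _ _
      _ ≤ |l| * (M + M) := by
          apply mul_le_mul_of_nonneg_left _ (abs_nonneg l)
          calc |f ω - I| ≤ |f ω| + |I| := abs_sub _ _
            _ ≤ M + M := add_le_add (hbM ω) hIM
  have markov := mul_meas_ge_le_integral_of_nonneg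
    (Filter.Eventually.of_forall (fun ω => (Real.exp_pos (l * (f ω - I))).le)) hZint
    (Real.exp (l*t))
  have hsub : {ω | t ≤ f ω - I} ⊆ {ω | Real.exp (l*t) ≤ Z ω} := by
    intro ω hω
    simp only [Set.mem_setOf_eq] at hω ⊢
    rw [hZ]
    exact Real.exp_le_exp.2 (mul_le_mul_of_nonneg_left hω hl0.le)
  have hA_fin : Pm {ω | t ≤ f ω - I} ≠ ⊤ := (measure_lt_top _ _).ne
  have hmono : (Pm {ω | t ≤ f ω - I}).toReal ≤ (Pm {ω | Real.exp (l*t) ≤ Z ω}).toReal :=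
    ENNReal.toReal_mono (measure_lt_top _ _).ne (measure_mono hsub)
  have hexp_eq : (m:ℝ) * (l^2 * c^2/8) - l * t = -2*t^2/(m*c^2) := by
    rw [hl]
    field_simp
    ring
  have key : (Pm {ω | t ≤ f ω - I}).toReal ≤ Real.exp (-2*t^2/(m*c^2)) := by
    have h1 : Real.exp (l*t) * (Pm {ω | t ≤ f ω - I}).toReal
        ≤ Real.exp ((m:ℝ) * (l^2 * c^2/8)) := by
      calc Real.exp (l*t) * (Pm {ω | t ≤ f ω - I}).toReal
          ≤ Real.exp (l*t) * (Pm {ω | Real.exp (l*t) ≤ Z ω}).toReal :=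
            mul_le_mul_of_nonneg_left hmono (Real.exp_pos _).le
        _ ≤ ∫ ω, Z ω ∂Pm := markov
        _ ≤ _ := hmgf
    have h2 : (Pm {ω | t ≤ f ω - I}).toReal
        ≤ Real.exp ((m:ℝ) * (l^2 * c^2/8)) / Real.exp (l*t) := by
      rw [le_div_iff₀ (Real.exp_pos _)]
      linarith [h1]
    calc (Pm {ω | t ≤ f ω - I}).toReal
        ≤ Real.exp ((m:ℝ) * (l^2 * c^2/8)) / Real.exp (l*t) := h2
      _ = Real.exp ((m:ℝ) * (l^2 * c^2/8) - l*t) := (Real.exp_sub _ _).symm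
      _ = Real.exp (-2*t^2/(m*c^2)) := by rw [hexp_eq]
  calc Pm {ω | t ≤ f ω - I} = ENNReal.ofReal ((Pm {ω | t ≤ f ω - I}).toReal) :=
        (ENNReal.ofReal_toReal hA_fin).symm
    _ ≤ ENNReal.ofReal (Real.exp (-2*t^2/(m*c^2))) := ENNReal.ofReal_le_ofReal key


lemma myiSup_congr {f g : ℕ → ℝ} (h : ∀ k, f k = g k) : (⨆ k, f k) = ⨆ k, g k :=
  congrArg iSup (funext h)

lemma iSup_le_hi {v : ℕ → ℝ} {hi : ℝ} (hhi : ∀ k, v k ≤ hi) : (⨆ k, v k) ≤ hi :=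
  ciSup_le hhi

lemma lo_le_iSup {v : ℕ → ℝ} {lo hi : ℝ} (hlo : ∀ k, lo ≤ v k) (hhi : ∀ k, v k ≤ hi) :
    lo ≤ ⨆ k, v k :=
  (hlo 0).trans (le_ciSup ⟨hi, by rintro x ⟨k, rfl⟩; exact hhi k⟩ 0)

lemma symmetrization {X : Type*} [MeasurableSpace X] (D : Measure X) [IsProbabilityMeasure D]
    (n : ℕ) (hn : 1 ≤ n) (u : ℕ → X → ℝ) (hum : ∀ k, Measurable (u k))
    (hu0 : ∀ k x, 0 ≤ u k x) (hu1 : ∀ k x, u k x ≤ 1) :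
    ∫ ω, (⨆ k, (∫ x, u k x ∂D - (1/(n:ℝ)) * ∑ i, u k (ω i)))
        ∂(Measure.pi fun _ : Fin n => D)
      ≤ 2 * ∫ ω, ((∑ σ : Fin n → Bool,
            ⨆ k, (1/(n:ℝ)) * ∑ i, (if σ i then (1:ℝ) else -1) * u k (ω i)) / 2^n)
          ∂(Measure.pi fun _ : Fin n => D) := by
  have hn0 : (0:ℝ) < n := by exact_mod_cast Nat.lt_of_lt_of_le Nat.zero_lt_one hn
  set ν : Measure (Fin n → X) := Measure.pi fun _ : Fin n => D with hν
  set P2 : Measure (Fin n → X × X) := Measure.pi fun _ : Fin n => D.prod D with hP2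
  -- abbreviations
  set emp : (Fin n → X) → ℕ → ℝ := fun ω k => (1/(n:ℝ)) * ∑ i, u k (ω i) with hemp
  set Ek : ℕ → ℝ := fun k => ∫ x, u k x ∂D with hEk
  set A : (Fin n → X) → ℝ := fun ω => ⨆ k, (Ek k - emp ω k) with hA
  set R : (Fin n → X) → ℝ := fun ω => (∑ σ : Fin n → Bool,
      ⨆ k, (1/(n:ℝ)) * ∑ i, (if σ i then (1:ℝ) else -1) * u k (ω i)) / 2^n with hR
  show ∫ ω, A ω ∂ν ≤ 2 * ∫ ω, R ω ∂ν
  -- basic bounds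
  have hempb : ∀ ω k, emp ω k ∈ Set.Icc (0:ℝ) 1 := by
    intro ω k
    constructor
    · apply mul_nonneg (by positivity)
      exact Finset.sum_nonneg fun i _ => hu0 k (ω i)
    · rw [hemp]
      simp only
      have hs : ∑ i : Fin n, u k (ω i) ≤ (n:ℝ) := by
        calc ∑ i : Fin n, u k (ω i) ≤ ∑ _i : Fin n, (1:ℝ) :=
              Finset.sum_le_sum fun i _ => hu1 k (ω i)
          _ = n := by simp
      calc (1/(n:ℝ)) * ∑ i, u k (ω i) ≤ (1/(n:ℝ)) * n :=
            mul_le_mul_of_nonneg_left hs (by positivity)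
        _ = 1 := by field_simp
  have hEkb : ∀ k, Ek k ∈ Set.Icc (0:ℝ) 1 := by
    intro k
    constructor
    · exact integral_nonneg (fun x => hu0 k x)
    · calc ∫ x, u k x ∂D ≤ ∫ _x, (1:ℝ) ∂D :=
          integral_mono (integrable_of_bdd_ (hum k).aestronglyMeasurable 1
            (fun x => abs_le.2 ⟨by linarith [hu0 k x], hu1 k x⟩)) (integrable_const 1)
            (fun x => hu1 k x)
      _ = 1 := by simp
  have hradb : ∀ (ω : Fin n → X) (σ : Fin n → Bool) k,
      |(1/(n:ℝ)) * ∑ i, (if σ i then (1:ℝ) else -1) * u k (ω i)| ≤ 1 := by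
    intro ω σ k
    rw [abs_mul, abs_of_pos (by positivity : (0:ℝ) < 1/(n:ℝ))]
    have hs : |∑ i, (if σ i then (1:ℝ) else -1) * u k (ω i)| ≤ (n:ℝ) := by
      calc |∑ i, (if σ i then (1:ℝ) else -1) * u k (ω i)|
        ≤ ∑ i : Fin n, |(if σ i then (1:ℝ) else -1) * u k (ω i)| :=
          Finset.abs_sum_le_sum_abs _ _
      _ ≤ ∑ _i : Fin n, (1:ℝ) := by
          apply Finset.sum_le_sum
          intro i _
          rw [abs_mul]
          rcases le_or_gt (u k (ω i)) 1 with h | h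
          · have h0 := hu0 k (ω i)
            by_cases hσ : σ i <;> simp [hσ, abs_of_nonneg h0] <;> linarith
          · linarith [hu1 k (ω i)]
      _ = n := by simp
    calc (1/(n:ℝ)) * |∑ i, (if σ i then (1:ℝ) else -1) * u k (ω i)| ≤ (1/(n:ℝ)) * n :=
          mul_le_mul_of_nonneg_left hs (by positivity)
      _ = 1 := by field_simp
  have hRb : ∀ ω, |R ω| ≤ 1 := by
    intro ω
    rw [hR]
    simp only
    rw [abs_div, abs_of_pos (by positivity : (0:ℝ) < (2:ℝ)^n), div_le_one (by positivity)]
    calc |∑ σ : Fin n → Bool, ⨆ k, (1/(n:ℝ)) * ∑ i, (if σ i then (1:ℝ) else -1) * u k (ω i)|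
        ≤ ∑ σ : Fin n → Bool, |⨆ k, (1/(n:ℝ)) * ∑ i, (if σ i then (1:ℝ) else -1) * u k (ω i)| :=
          Finset.abs_sum_le_sum_abs _ _
      _ ≤ ∑ _σ : Fin n → Bool, (1:ℝ) := by
          apply Finset.sum_le_sum
          intro σ _
          rw [abs_le]
          constructor
          · apply lo_le_iSup (hi := 1) (fun k => (abs_le.1 (hradb ω σ k)).1)
              (fun k => (abs_le.1 (hradb ω σ k)).2)
          · exact iSup_le_hi (fun k => (abs_le.1 (hradb ω σ k)).2)
      _ = 2^n := by simp
  have hAb : ∀ ω, |A ω| ≤ 1 := by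
    intro ω
    rw [hA, abs_le]
    constructor
    · apply lo_le_iSup (hi := 1)
        (fun k => by linarith [(hEkb k).1, (hempb ω k).2])
        (fun k => by linarith [(hEkb k).2, (hempb ω k).1])
    · exact iSup_le_hi (fun k => by linarith [(hEkb k).2, (hempb ω k).1])
  -- measurability
  have hempm : ∀ k, Measurable (fun ω : Fin n → X => emp ω k) := by
    intro k
    apply Measurable.const_mul
    exact Finset.measurable_sum _ (fun i _ => (hum k).comp (measurable_pi_apply i))
  have hAm : Measurable A :=
    Measurable.iSup (fun k => measurable_const.sub (hempm k))
  have hradm : ∀ (σ : Fin n → Bool) k,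
      Measurable (fun ω : Fin n → X => (1/(n:ℝ)) * ∑ i, (if σ i then (1:ℝ) else -1) * u k (ω i)) := by
    intro σ k
    apply Measurable.const_mul
    exact Finset.measurable_sum _ (fun i _ =>
      ((hum k).comp (measurable_pi_apply i)).const_mul _)
  have hRm : Measurable R := by
    apply Measurable.div_const
    exact Finset.measurable_sum _ (fun σ _ => Measurable.iSup (fun k => hradm σ k))
  -- marginal of eval
  have heval : ∀ (i : Fin n), MeasurePreserving (fun ω : Fin n → X => ω i) ν D := by
    intro i
    refine ⟨measurable_pi_apply i, ?_⟩
    apply Measure.ext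
    intro s hs
    rw [Measure.map_apply (measurable_pi_apply i) hs]
    have hpre : (fun ω : Fin n → X => ω i) ⁻¹' s
        = Set.pi Set.univ (Function.update (fun _ : Fin n => (Set.univ : Set X)) i s) := by
      ext ω
      simp only [Set.mem_preimage, Set.mem_pi, Set.mem_univ, true_implies]
      constructor
      · intro h j
        by_cases hj : j = i
        · subst hj; simpa using h
        · simp [Function.update_of_ne hj]
      · intro h
        have := h i
        simpa using this
    rw [hpre, hν, Measure.pi_pi]
    rw [Fintype.prod_eq_single i (fun j hj => by simp [Function.update_of_ne hj])]
    simp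
  have hevali : ∀ (i : Fin n) k, ∫ ω, u k (ω i) ∂ν = Ek k := by
    intro i k
    rw [hEk]
    simp only
    rw [← (heval i).map_eq, integral_map ((heval i).measurable).aemeasurable
      (hum k).aestronglyMeasurable]
  have hempint : ∀ k, Integrable (fun ω => emp ω k) ν :=
    fun k => integrable_of_bdd_ (hempm k).aestronglyMeasurable 1
      (fun ω => abs_le.2 ⟨by linarith [(hempb ω k).1], (hempb ω k).2⟩)
  have hcoordm : ∀ k (i : Fin n), Measurable (fun ω : Fin n → X => u k (ω i)) := by
    intro k i
    exact (hum k).comp (measurable_pi_apply i)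
  have hcoord_int : ∀ k (i : Fin n), Integrable (fun ω : Fin n → X => u k (ω i)) ν :=
    fun k i => integrable_of_bdd_ (hcoordm k i).aestronglyMeasurable 1
      (fun ω => abs_le.2 ⟨by linarith [hu0 k (ω i)], hu1 k (ω i)⟩)
  have hEk_emp : ∀ k, ∫ ω, emp ω k ∂ν = Ek k := by
    intro k
    rw [hemp]
    simp only
    rw [integral_const_mul, integral_finset_sum _ (fun i _ => hcoord_int k i)]
    have : ∀ i : Fin n, ∫ ω, u k (ω i) ∂ν = Ek k := fun i => hevali i k
    rw [Finset.sum_congr rfl (fun i _ => this i)]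
    simp
    field_simp
  -- the product equivalence
  set E := MeasurableEquiv.arrowProdEquivProdArrow X X (Fin n) with hE
  have hEmp : MeasurePreserving (⇑E) P2 (ν.prod ν) :=
    measurePreserving_arrowProdEquivProdArrow X X (Fin n) (fun _ => D) (fun _ => D)
  set W : (Fin n → X) × (Fin n → X) → ℝ := fun z => ⨆ k, (emp z.2 k - emp z.1 k) with hW
  have hWm : Measurable W :=
    Measurable.iSup (fun k => ((hempm k).comp measurable_snd).sub ((hempm k).comp measurable_fst))
  have hWb : ∀ z, |W z| ≤ 1 := by
    intro z
    rw [hW, abs_le]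
    constructor
    · exact lo_le_iSup (hi := 1)
        (fun k => by linarith [(hempb z.2 k).1, (hempb z.1 k).2])
        (fun k => by linarith [(hempb z.2 k).2, (hempb z.1 k).1])
    · exact iSup_le_hi (fun k => by linarith [(hempb z.2 k).2, (hempb z.1 k).1])
  -- Step 1: ∫ A ≤ ∫∫ W
  have hWint : Integrable W (ν.prod ν) := integrable_of_bdd_ hWm.aestronglyMeasurable 1 hWb
  have hAW : ∀ ω, A ω ≤ ∫ ω', W (ω, ω') ∂ν := by
    intro ω
    rw [hA]
    apply ciSup_le
    intro k
    have h1 : Ek k - emp ω k = ∫ ω', (emp ω' k - emp ω k) ∂ν := by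
      rw [integral_sub (hempint k) (integrable_const _), hEk_emp k, integral_const]
      simp
    rw [h1]
    apply integral_mono
    · exact (hempint k).sub (integrable_const _)
    · exact integrable_of_bdd_ (hWm.comp (measurable_const.prodMk measurable_id)).aestronglyMeasurable
        1 (fun ω' => hWb _)
    · intro ω'
      have hbdd : BddAbove (Set.range (fun k' => emp ω' k' - emp ω k')) := by
        refine ⟨1, ?_⟩
        rintro x ⟨k', rfl⟩
        have := (hempb ω' k').2
        have := (hempb ω k').1
        simp only
        linarith
      exact le_ciSup hbdd k
  have hWslice_m : StronglyMeasurable (fun ω => ∫ ω', W (ω, ω') ∂ν) :=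
    hWm.stronglyMeasurable.integral_prod_right'
  have step1 : ∫ ω, A ω ∂ν ≤ ∫ z, W z ∂(ν.prod ν) := by
    have h2 : ∫ ω, A ω ∂ν ≤ ∫ ω, (∫ ω', W (ω, ω') ∂ν) ∂ν := by
      apply integral_mono
      · exact integrable_of_bdd_ hAm.aestronglyMeasurable 1 hAb
      · apply integrable_of_bdd_ hWslice_m.aestronglyMeasurable 1
        intro ω
        have := norm_integral_le_of_norm_le_const (μ := ν)
          (f := fun ω' => W (ω, ω')) (C := 1)
          (Filter.Eventually.of_forall (fun ω' => by simpa using hWb (ω, ω')))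
        simpa using this
      · exact hAW
    rw [integral_prod _ hWint]
    exact h2
  -- Step 2: ∫ W d(ν.prod ν) = ∫ Φ dP2
  set Φ : (Fin n → X × X) → ℝ := fun p => ⨆ k,
    (emp (fun i => (p i).2) k - emp (fun i => (p i).1) k) with hΦ
  have hstep2 : ∫ z, W z ∂(ν.prod ν) = ∫ p, Φ p ∂P2 := by
    rw [← hEmp.map_eq, integral_map hEmp.measurable.aemeasurable hWm.aestronglyMeasurable]
    rfl
  -- Step 3: swap invariance
  have hΦm : Measurable Φ := by
    apply Measurable.iSup
    intro k
    apply Measurable.sub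
    · exact (hempm k).comp (measurable_pi_iff.2 fun i =>
        measurable_snd.comp (measurable_pi_apply i))
    · exact (hempm k).comp (measurable_pi_iff.2 fun i =>
        measurable_fst.comp (measurable_pi_apply i))
  have hΦb : ∀ p, |Φ p| ≤ 1 := fun p => hWb (E p)
  -- sign function
  set sg : (Fin n → Bool) → Fin n → ℝ := fun σ i => if σ i then -1 else 1 with hsg
  set Φσ : (Fin n → Bool) → (Fin n → X × X) → ℝ := fun σ p =>
    ⨆ k, (1/(n:ℝ)) * ∑ i, sg σ i * (u k ((p i).2) - u k ((p i).1)) with hΦσ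
  have hΦσm : ∀ σ, Measurable (Φσ σ) := by
    intro σ
    apply Measurable.iSup
    intro k
    apply Measurable.const_mul
    apply Finset.measurable_sum
    intro i _
    apply Measurable.const_mul
    exact ((hum k).comp (measurable_snd.comp (measurable_pi_apply i))).sub
      ((hum k).comp (measurable_fst.comp (measurable_pi_apply i)))
  have hΦσterm : ∀ σ (p : Fin n → X × X) k,
      |(1/(n:ℝ)) * ∑ i, sg σ i * (u k ((p i).2) - u k ((p i).1))| ≤ 1 := by
    intro σ p k
    rw [abs_mul, abs_of_pos (by positivity : (0:ℝ) < 1/(n:ℝ))]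
    have hs : |∑ i, sg σ i * (u k ((p i).2) - u k ((p i).1))| ≤ (n:ℝ) := by
      calc |∑ i, sg σ i * (u k ((p i).2) - u k ((p i).1))|
          ≤ ∑ i : Fin n, |sg σ i * (u k ((p i).2) - u k ((p i).1))| :=
            Finset.abs_sum_le_sum_abs _ _
        _ ≤ ∑ _i : Fin n, (1:ℝ) := by
            apply Finset.sum_le_sum
            intro i _
            rw [abs_mul]
            have h1 : |sg σ i| = 1 := by
              rw [hsg]; by_cases h : σ i <;> simp [h]
            rw [h1, one_mul, abs_le]
            constructor
            · linarith [hu0 k ((p i).2), hu1 k ((p i).1)]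
            · linarith [hu1 k ((p i).2), hu0 k ((p i).1)]
        _ = n := by simp
    calc (1/(n:ℝ)) * |∑ i, sg σ i * (u k ((p i).2) - u k ((p i).1))| ≤ (1/(n:ℝ)) * n :=
          mul_le_mul_of_nonneg_left hs (by positivity)
      _ = 1 := by field_simp
  have hΦσb : ∀ σ p, |Φσ σ p| ≤ 1 := by
    intro σ p
    rw [hΦσ, abs_le]
    simp only
    constructor
    · exact lo_le_iSup (hi := 1) (fun k => (abs_le.1 (hΦσterm σ p k)).1)
        (fun k => (abs_le.1 (hΦσterm σ p k)).2)
    · exact iSup_le_hi (fun k => (abs_le.1 (hΦσterm σ p k)).2)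
  -- the swap map
  have hswap_mp : ∀ σ : Fin n → Bool,
      MeasurePreserving (fun (p : Fin n → X × X) i => if σ i then Prod.swap (p i) else p i) P2 P2 := by
    intro σ
    have hTm : Measurable (fun (p : Fin n → X × X) i => if σ i then Prod.swap (p i) else p i) := by
      rw [measurable_pi_iff]
      intro i
      by_cases h : σ i
      · simp only [h, if_true]; exact measurable_swap.comp (measurable_pi_apply i)
      · simpa [h] using (measurable_pi_apply i : Measurable fun p : Fin n → X × X => p i)
    refine ⟨hTm, ?_⟩
    symm
    rw [hP2]
    apply Measure.pi_eq
    intro s hs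
    rw [Measure.map_apply hTm (MeasurableSet.univ_pi hs)]
    have hpre : (fun (p : Fin n → X × X) i => if σ i then Prod.swap (p i) else p i) ⁻¹' (Set.pi Set.univ s)
        = Set.pi Set.univ (fun i => if σ i then Prod.swap ⁻¹' (s i) else s i) := by
      ext p
      simp only [Set.mem_preimage, Set.mem_pi, Set.mem_univ, true_implies]
      apply forall_congr'
      intro i
      by_cases h : σ i <;> simp [h]
    rw [hpre, ← hP2, hP2, Measure.pi_pi]
    apply Finset.prod_congr rfl
    intro i _
    by_cases h : σ i
    · simp only [h, if_true]
      rw [← Measure.map_apply measurable_swap (hs i), Measure.prod_swap]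
    · simp [h]
  have hswapΦ : ∀ (σ : Fin n → Bool) (p : Fin n → X × X),
      Φ (fun i => if σ i then Prod.swap (p i) else p i) = Φσ σ p := by
    intro σ p
    rw [hΦ, hΦσ]
    apply myiSup_congr
    intro k
    rw [hemp]
    simp only
    rw [← mul_sub, ← Finset.sum_sub_distrib]
    congr 1
    apply Finset.sum_congr rfl
    intro i _
    by_cases h : σ i <;> simp [h, hsg] <;> ring
  have hTint : ∀ σ : Fin n → Bool, ∫ p, Φ p ∂P2 = ∫ p, Φσ σ p ∂P2 := by
    intro σ
    have h1 := integral_map (μ := P2) (hswap_mp σ).measurable.aemeasurable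
      hΦm.aestronglyMeasurable
    rw [(hswap_mp σ).map_eq] at h1
    rw [h1]
    exact integral_congr_ae (Filter.Eventually.of_forall (fun p => hswapΦ σ p))
  -- average over σ
  have havg : ∫ p, Φ p ∂P2 = ∫ p, ((∑ σ : Fin n → Bool, Φσ σ p) / 2^n) ∂P2 := by
    symm
    rw [integral_div]
    rw [integral_finset_sum _ (fun σ _ => integrable_of_bdd_ (hΦσm σ).aestronglyMeasurable 1 (hΦσb σ))]
    rw [Finset.sum_congr rfl (fun σ _ => (hTint σ).symm)]
    rw [Finset.sum_const, Finset.card_univ, nsmul_eq_mul]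
    have hcard : ((Fintype.card (Fin n → Bool)) : ℝ) = 2^n := by
      simp [Fintype.card_fun]
    rw [hcard, mul_div_cancel_left₀ _ (by positivity : ((2:ℝ)^n) ≠ 0)]
  -- pointwise bound of the average by R ∘ fst + R ∘ snd
  have hpoint : ∀ p : Fin n → X × X,
      (∑ σ : Fin n → Bool, Φσ σ p) / 2^n
        ≤ R (fun i => (p i).1) + R (fun i => (p i).2) := by
    intro p
    set S2 : (Fin n → Bool) → ℝ := fun σ =>
      ⨆ k, (1/(n:ℝ)) * ∑ i, sg σ i * u k ((p i).2) with hS2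
    set S1 : (Fin n → Bool) → ℝ := fun σ =>
      ⨆ k, (1/(n:ℝ)) * ∑ i, (-(sg σ i)) * u k ((p i).1) with hS1
    have hterm2 : ∀ σ k, |(1/(n:ℝ)) * ∑ i, sg σ i * u k ((p i).2)| ≤ 1 := by
      intro σ k
      have := hradb (fun i => (p i).2) (fun i => !(σ i)) k
      convert this using 3
      apply Finset.sum_congr rfl
      intro i _
      by_cases h : σ i <;> simp [h, hsg]
    have hterm1 : ∀ σ k, |(1/(n:ℝ)) * ∑ i, (-(sg σ i)) * u k ((p i).1)| ≤ 1 := by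
      intro σ k
      have := hradb (fun i => (p i).1) σ k
      convert this using 3
      apply Finset.sum_congr rfl
      intro i _
      by_cases h : σ i <;> simp [h, hsg]
    have hsplit : ∀ σ, Φσ σ p ≤ S2 σ + S1 σ := by
      intro σ
      rw [hΦσ]
      apply ciSup_le
      intro k
      have heq : (1/(n:ℝ)) * ∑ i, sg σ i * (u k ((p i).2) - u k ((p i).1))
          = (1/(n:ℝ)) * ∑ i, sg σ i * u k ((p i).2)
            + (1/(n:ℝ)) * ∑ i, (-(sg σ i)) * u k ((p i).1) := by
        rw [← mul_add, ← Finset.sum_add_distrib]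
        congr 1
        apply Finset.sum_congr rfl
        intro i _
        ring
      rw [heq]
      have hb2 : BddAbove (Set.range fun k' => (1/(n:ℝ)) * ∑ i, sg σ i * u k' ((p i).2)) := by
        refine ⟨1, ?_⟩
        rintro x ⟨k', rfl⟩
        exact (abs_le.1 (hterm2 σ k')).2
      have hb1 : BddAbove (Set.range fun k' => (1/(n:ℝ)) * ∑ i, (-(sg σ i)) * u k' ((p i).1)) := by
        refine ⟨1, ?_⟩
        rintro x ⟨k', rfl⟩
        exact (abs_le.1 (hterm1 σ k')).2
      exact add_le_add (le_ciSup hb2 k) (le_ciSup hb1 k)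
    -- sum of S2 over σ equals 2^n * R (snd ∘ p) via reindexing by negation
    have hnegEquiv : Function.Bijective (fun (σ : Fin n → Bool) i => !(σ i)) := by
      constructor
      · intro a b hab
        funext i
        have := congrFun hab i
        simpa using this
      · intro b
        exact ⟨fun i => !(b i), by funext i; simp⟩
    have hsum2 : ∑ σ : Fin n → Bool, S2 σ = 2^n * R (fun i => (p i).2) := by
      rw [hR]
      simp only
      rw [show ((2:ℝ)^n) * ((∑ σ : Fin n → Bool, ⨆ k, (1/(n:ℝ)) * ∑ i, (if σ i then (1:ℝ) else -1) * u k ((p i).2)) / 2^n)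
          = ∑ σ : Fin n → Bool, ⨆ k, (1/(n:ℝ)) * ∑ i, (if σ i then (1:ℝ) else -1) * u k ((p i).2) by
        field_simp]
      apply Fintype.sum_bijective _ hnegEquiv
      intro σ
      rw [hS2]
      apply myiSup_congr
      intro k
      congr 1
      apply Finset.sum_congr rfl
      intro i _
      by_cases h : σ i <;> simp [h, hsg]
    have hsum1 : ∑ σ : Fin n → Bool, S1 σ = 2^n * R (fun i => (p i).1) := by
      rw [hR]
      simp only
      rw [show ((2:ℝ)^n) * ((∑ σ : Fin n → Bool, ⨆ k, (1/(n:ℝ)) * ∑ i, (if σ i then (1:ℝ) else -1) * u k ((p i).1)) / 2^n)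
          = ∑ σ : Fin n → Bool, ⨆ k, (1/(n:ℝ)) * ∑ i, (if σ i then (1:ℝ) else -1) * u k ((p i).1) by
        field_simp]
      apply Finset.sum_congr rfl
      intro σ _
      rw [hS1]
      apply myiSup_congr
      intro k
      congr 1
      apply Finset.sum_congr rfl
      intro i _
      by_cases h : σ i <;> simp [h, hsg]
    have hsum : ∑ σ : Fin n → Bool, Φσ σ p ≤ 2^n * (R (fun i => (p i).1) + R (fun i => (p i).2)) := by
      calc ∑ σ : Fin n → Bool, Φσ σ p ≤ ∑ σ : Fin n → Bool, (S2 σ + S1 σ) :=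
            Finset.sum_le_sum (fun σ _ => hsplit σ)
        _ = (∑ σ : Fin n → Bool, S2 σ) + (∑ σ : Fin n → Bool, S1 σ) := Finset.sum_add_distrib
        _ = 2^n * (R (fun i => (p i).1) + R (fun i => (p i).2)) := by
            rw [hsum2, hsum1]; ring
    rw [div_le_iff₀ (by positivity : (0:ℝ) < (2:ℝ)^n)]
    linarith [hsum]
  -- marginals of R
  have hfst_mp : MeasurePreserving (fun p : Fin n → X × X => (fun i => (p i).1)) P2 ν := by
    have h1 : MeasurePreserving (Prod.fst : (Fin n → X) × (Fin n → X) → (Fin n → X)) (ν.prod ν) ν := by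
      refine ⟨measurable_fst, ?_⟩
      rw [Measure.map_fst_prod]
      simp
    exact h1.comp hEmp
  have hsnd_mp : MeasurePreserving (fun p : Fin n → X × X => (fun i => (p i).2)) P2 ν := by
    have h1 : MeasurePreserving (Prod.snd : (Fin n → X) × (Fin n → X) → (Fin n → X)) (ν.prod ν) ν := by
      refine ⟨measurable_snd, ?_⟩
      rw [Measure.map_snd_prod]
      simp
    exact h1.comp hEmp
  have hRfst_m : Measurable (fun p : Fin n → X × X => R (fun i => (p i).1)) := by
    exact hRm.comp hfst_mp.measurable
  have hRsnd_m : Measurable (fun p : Fin n → X × X => R (fun i => (p i).2)) := by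
    exact hRm.comp hsnd_mp.measurable
  have hRfst_int : Integrable (fun p : Fin n → X × X => R (fun i => (p i).1)) P2 :=
    integrable_of_bdd_ hRfst_m.aestronglyMeasurable 1 (fun p => hRb _)
  have hRsnd_int : Integrable (fun p : Fin n → X × X => R (fun i => (p i).2)) P2 :=
    integrable_of_bdd_ hRsnd_m.aestronglyMeasurable 1 (fun p => hRb _)
  have hRfst : ∫ p, R (fun i => (p i).1) ∂P2 = ∫ ω, R ω ∂ν := by
    rw [← hfst_mp.map_eq, integral_map hfst_mp.measurable.aemeasurable hRm.aestronglyMeasurable]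
  have hRsnd : ∫ p, R (fun i => (p i).2) ∂P2 = ∫ ω, R ω ∂ν := by
    rw [← hsnd_mp.map_eq, integral_map hsnd_mp.measurable.aemeasurable hRm.aestronglyMeasurable]
  -- final chain
  have havgm : Measurable (fun p => (∑ σ : Fin n → Bool, Φσ σ p) / 2^n) :=
    (Finset.measurable_sum _ (fun σ _ => hΦσm σ)).div_const _
  have hstep3 : ∫ p, ((∑ σ : Fin n → Bool, Φσ σ p) / 2^n) ∂P2
      ≤ ∫ p, (R (fun i => (p i).1) + R (fun i => (p i).2)) ∂P2 := by
    apply integral_mono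
    · apply integrable_of_bdd_ havgm.aestronglyMeasurable 1
      intro p
      rw [abs_div, abs_of_pos (by positivity : (0:ℝ) < (2:ℝ)^n), div_le_one (by positivity)]
      calc |∑ σ : Fin n → Bool, Φσ σ p| ≤ ∑ σ : Fin n → Bool, |Φσ σ p| :=
            Finset.abs_sum_le_sum_abs _ _
        _ ≤ ∑ _σ : Fin n → Bool, (1:ℝ) := Finset.sum_le_sum (fun σ _ => hΦσb σ p)
        _ = 2^n := by simp
    · exact hRfst_int.add hRsnd_int
    · exact hpoint
  have hstep4 : ∫ p, (R (fun i => (p i).1) + R (fun i => (p i).2)) ∂P2 = 2 * ∫ ω, R ω ∂ν := by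
    rw [integral_add hRfst_int hRsnd_int]
    rw [hRfst, hRsnd]
    ring
  calc ∫ ω, A ω ∂ν ≤ ∫ z, W z ∂(ν.prod ν) := step1
    _ = ∫ p, Φ p ∂P2 := hstep2
    _ = ∫ p, ((∑ σ : Fin n → Bool, Φσ σ p) / 2^n) ∂P2 := havg
    _ ≤ ∫ p, (R (fun i => (p i).1) + R (fun i => (p i).2)) ∂P2 := hstep3
    _ = 2 * ∫ ω, R ω ∂ν := hstep4


/-- The empirical Rademacher complexity of the class `H` w.r.t. the sample `x`:
the expectation, over i.i.d. uniform signs `σ ∈ {−1,+1}^n`, of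
`sup_{h ∈ H} (1/n) ∑ i σ_i h(x_i)`.  The expectation is written as the average
over all `2^n` sign vectors (encoded as `Fin n → Bool`). -/
noncomputable def radS {X : Type*} {n : ℕ} (x : Fin n → X) (H : Set (X → ℝ)) : ℝ :=
  (∑ σ : Fin n → Bool,
    sSup ((fun h => (1 / (n : ℝ)) * ∑ i, (if σ i then (1 : ℝ) else -1) * h (x i)) '' H))
    / 2 ^ n

theorem stmt_4 {X : Type*} [MeasurableSpace X]
    (D : Measure X) [IsProbabilityMeasure D]
    (Ht : Set (X → ℝ)) (hHcount : Ht.Countable) (hHne : Ht.Nonempty)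
    (hmeas : ∀ h ∈ Ht, Measurable h)
    (hrange : ∀ h ∈ Ht, ∀ x, h x = 0 ∨ h x = 1)
    (n : ℕ) (hn : 1 ≤ n) (δ : ℝ) (hδ : δ ∈ Ioo (0 : ℝ) 1) :
    ENNReal.ofReal (1 - δ) ≤
      (Measure.pi fun _ : Fin n => D)
        {ω | ∀ h ∈ Ht,
          ∫ x, h x ∂D ≤
            (1 / (n : ℝ)) * ∑ i, h (ω i) + 2 * radS ω Ht +
              3 * Real.sqrt (Real.log (2 / δ) / (2 * n))} := by
  obtain ⟨u, hu⟩ := hHcount.exists_eq_range hHne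
  have humem : ∀ k, u k ∈ Ht := fun k => hu ▸ Set.mem_range_self k
  have hum : ∀ k, Measurable (u k) := fun k => hmeas _ (humem k)
  have hu0 : ∀ k x, 0 ≤ u k x := by
    intro k x
    rcases hrange _ (humem k) x with h | h <;> rw [h] <;> norm_num
  have hu1 : ∀ k x, u k x ≤ 1 := by
    intro k x
    rcases hrange _ (humem k) x with h | h <;> rw [h] <;> norm_num
  have hn0 : (0:ℝ) < n := by exact_mod_cast Nat.lt_of_lt_of_le Nat.zero_lt_one hn
  set ν : Measure (Fin n → X) := Measure.pi fun _ : Fin n => D with hν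
  set emp : (Fin n → X) → ℕ → ℝ := fun ω k => (1/(n:ℝ)) * ∑ i, u k (ω i) with hemp
  set Ek : ℕ → ℝ := fun k => ∫ x, u k x ∂D with hEk
  set A : (Fin n → X) → ℝ := fun ω => ⨆ k, (Ek k - emp ω k) with hA
  set R : (Fin n → X) → ℝ := fun ω => (∑ σ : Fin n → Bool,
      ⨆ k, (1/(n:ℝ)) * ∑ i, (if σ i then (1:ℝ) else -1) * u k (ω i)) / 2^n with hR
  set F : (Fin n → X) → ℝ := fun ω => A ω - 2 * R ω with hF
  -- radS = R
  have hradSR : ∀ ω : Fin n → X, radS ω Ht = R ω := by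
    intro ω
    rw [radS, hR]
    congr 1
    apply Finset.sum_congr rfl
    intro σ _
    rw [hu, ← Set.range_comp]
    rw [← sSup_range]
    rfl
  -- bounds (duplicated from symmetrization)
  have hempb : ∀ ω k, emp ω k ∈ Set.Icc (0:ℝ) 1 := by
    intro ω k
    constructor
    · apply mul_nonneg (by positivity)
      exact Finset.sum_nonneg fun i _ => hu0 k (ω i)
    · rw [hemp]
      simp only
      have hs : ∑ i : Fin n, u k (ω i) ≤ (n:ℝ) := by
        calc ∑ i : Fin n, u k (ω i) ≤ ∑ _i : Fin n, (1:ℝ) :=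
              Finset.sum_le_sum fun i _ => hu1 k (ω i)
          _ = n := by simp
      calc (1/(n:ℝ)) * ∑ i, u k (ω i) ≤ (1/(n:ℝ)) * n :=
            mul_le_mul_of_nonneg_left hs (by positivity)
        _ = 1 := by field_simp
  have hEkb : ∀ k, Ek k ∈ Set.Icc (0:ℝ) 1 := by
    intro k
    constructor
    · exact integral_nonneg (fun x => hu0 k x)
    · calc ∫ x, u k x ∂D ≤ ∫ _x, (1:ℝ) ∂D :=
          integral_mono (integrable_of_bdd_ (hum k).aestronglyMeasurable 1
            (fun x => abs_le.2 ⟨by linarith [hu0 k x], hu1 k x⟩)) (integrable_const 1)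
            (fun x => hu1 k x)
      _ = 1 := by simp
  have hradb : ∀ (ω : Fin n → X) (σ : Fin n → Bool) k,
      |(1/(n:ℝ)) * ∑ i, (if σ i then (1:ℝ) else -1) * u k (ω i)| ≤ 1 := by
    intro ω σ k
    rw [abs_mul, abs_of_pos (by positivity : (0:ℝ) < 1/(n:ℝ))]
    have hs : |∑ i, (if σ i then (1:ℝ) else -1) * u k (ω i)| ≤ (n:ℝ) := by
      calc |∑ i, (if σ i then (1:ℝ) else -1) * u k (ω i)|
          ≤ ∑ i : Fin n, |(if σ i then (1:ℝ) else -1) * u k (ω i)| :=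
            Finset.abs_sum_le_sum_abs _ _
        _ ≤ ∑ _i : Fin n, (1:ℝ) := by
            apply Finset.sum_le_sum
            intro i _
            rw [abs_mul]
            rcases le_or_gt (u k (ω i)) 1 with h | h
            · have h0 := hu0 k (ω i)
              by_cases hσ : σ i <;> simp [hσ, abs_of_nonneg h0] <;> linarith
            · linarith [hu1 k (ω i)]
        _ = n := by simp
    calc (1/(n:ℝ)) * |∑ i, (if σ i then (1:ℝ) else -1) * u k (ω i)| ≤ (1/(n:ℝ)) * n :=
          mul_le_mul_of_nonneg_left hs (by positivity)
      _ = 1 := by field_simp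
  have hRb : ∀ ω, |R ω| ≤ 1 := by
    intro ω
    rw [hR]
    simp only
    rw [abs_div, abs_of_pos (by positivity : (0:ℝ) < (2:ℝ)^n), div_le_one (by positivity)]
    calc |∑ σ : Fin n → Bool, ⨆ k, (1/(n:ℝ)) * ∑ i, (if σ i then (1:ℝ) else -1) * u k (ω i)|
        ≤ ∑ σ : Fin n → Bool, |⨆ k, (1/(n:ℝ)) * ∑ i, (if σ i then (1:ℝ) else -1) * u k (ω i)| :=
          Finset.abs_sum_le_sum_abs _ _
      _ ≤ ∑ _σ : Fin n → Bool, (1:ℝ) := by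
          apply Finset.sum_le_sum
          intro σ _
          rw [abs_le]
          exact ⟨lo_le_iSup (hi := 1) (fun k => (abs_le.1 (hradb ω σ k)).1)
              (fun k => (abs_le.1 (hradb ω σ k)).2),
            iSup_le_hi (fun k => (abs_le.1 (hradb ω σ k)).2)⟩
      _ = 2^n := by simp
  have hAb : ∀ ω, |A ω| ≤ 1 := by
    intro ω
    rw [hA, abs_le]
    exact ⟨lo_le_iSup (hi := 1)
        (fun k => by linarith [(hEkb k).1, (hempb ω k).2])
        (fun k => by linarith [(hEkb k).2, (hempb ω k).1]),
      iSup_le_hi (fun k => by linarith [(hEkb k).2, (hempb ω k).1])⟩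
  have hFb : ∀ ω, |F ω| ≤ 3 := by
    intro ω
    rw [hF]
    simp only
    calc |A ω - 2 * R ω| ≤ |A ω| + |2 * R ω| := abs_sub _ _
      _ = |A ω| + 2 * |R ω| := by rw [abs_mul]; norm_num
      _ ≤ 1 + 2 * 1 := by have := hAb ω; have := hRb ω; linarith
      _ = 3 := by norm_num
  -- measurability
  have hempm : ∀ k, Measurable (fun ω : Fin n → X => emp ω k) := by
    intro k
    apply Measurable.const_mul
    exact Finset.measurable_sum _ (fun i _ => (hum k).comp (measurable_pi_apply i))
  have hAm : Measurable A :=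
    Measurable.iSup (fun k => measurable_const.sub (hempm k))
  have hRm : Measurable R := by
    apply Measurable.div_const
    apply Finset.measurable_sum
    intro σ _
    apply Measurable.iSup
    intro k
    apply Measurable.const_mul
    exact Finset.measurable_sum _ (fun i _ =>
      ((hum k).comp (measurable_pi_apply i)).const_mul _)
  have hFm : Measurable F := hAm.sub (hRm.const_mul 2)
  -- bounded differences
  have hsum_upd : ∀ (k : ℕ) (ω : Fin n → X) (i : Fin n) (z : X) (s : Fin n → ℝ),
      (∑ j, s j * u k (Function.update ω i z j))
        = s i * u k z + ∑ j ∈ Finset.univ.erase i, s j * u k (ω j) := by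
    intro k ω i z s
    rw [← Finset.add_sum_erase _ (fun j => s j * u k (Function.update ω i z j))
      (Finset.mem_univ i)]
    congr 1
    · rw [Function.update_self]
    · apply Finset.sum_congr rfl
      intro j hj
      rw [Function.update_of_ne (Finset.mem_erase.1 hj).1]
  have hemp_diff : ∀ k (i : Fin n) (ω : Fin n → X) (x y : X),
      emp (Function.update ω i y) k - emp (Function.update ω i x) k ≤ 1/(n:ℝ) := by
    intro k i ω x y
    rw [hemp]
    simp only
    have h1 := hsum_upd k ω i x (fun _ => 1)
    have h2 := hsum_upd k ω i y (fun _ => 1)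
    simp only [one_mul] at h1 h2
    rw [h1, h2, ← mul_sub]
    have h3 : u k y - u k x ≤ 1 := by linarith [hu1 k y, hu0 k x]
    calc (1/(n:ℝ)) * (u k y + ∑ j ∈ Finset.univ.erase i, u k (ω j)
          - (u k x + ∑ j ∈ Finset.univ.erase i, u k (ω j)))
        = (1/(n:ℝ)) * (u k y - u k x) := by ring_nf
      _ ≤ (1/(n:ℝ)) * 1 := mul_le_mul_of_nonneg_left h3 (by positivity)
      _ = 1/(n:ℝ) := by ring
  have hA_diff : ∀ (i : Fin n) (ω : Fin n → X) (x y : X),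
      A (Function.update ω i x) - A (Function.update ω i y) ≤ 1/(n:ℝ) := by
    intro i ω x y
    rw [sub_le_iff_le_add']
    show (⨆ k, Ek k - emp (Function.update ω i x) k) ≤ A (Function.update ω i y) + 1/(n:ℝ)
    apply ciSup_le
    intro k
    have hbdd : BddAbove (Set.range (fun k' => Ek k' - emp (Function.update ω i y) k')) := by
      refine ⟨1, ?_⟩
      rintro v ⟨k', rfl⟩
      have := (hEkb k').2
      have := (hempb (Function.update ω i y) k').1
      simp only
      linarith
    have hle : Ek k - emp (Function.update ω i y) k ≤ A (Function.update ω i y) :=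
      le_ciSup hbdd k
    linarith [hemp_diff k i ω x y, hle]
  have hrad_diff : ∀ (σ : Fin n → Bool) (i : Fin n) (ω : Fin n → X) (x y : X),
      (⨆ k, (1/(n:ℝ)) * ∑ j, (if σ j then (1:ℝ) else -1) * u k (Function.update ω i x j))
        - (⨆ k, (1/(n:ℝ)) * ∑ j, (if σ j then (1:ℝ) else -1) * u k (Function.update ω i y j))
        ≤ 1/(n:ℝ) := by
    intro σ i ω x y
    rw [sub_le_iff_le_add]
    apply ciSup_le
    intro k
    have hbdd : BddAbove (Set.range (fun k' => (1/(n:ℝ)) * ∑ j,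
        (if σ j then (1:ℝ) else -1) * u k' (Function.update ω i y j))) := by
      refine ⟨1, ?_⟩
      rintro v ⟨k', rfl⟩
      exact (abs_le.1 (hradb (Function.update ω i y) σ k')).2
    have hdd : (1/(n:ℝ)) * ∑ j, (if σ j then (1:ℝ) else -1) * u k (Function.update ω i x j)
        - (1/(n:ℝ)) * ∑ j, (if σ j then (1:ℝ) else -1) * u k (Function.update ω i y j)
        ≤ 1/(n:ℝ) := by
      rw [hsum_upd k ω i x, hsum_upd k ω i y, ← mul_sub]
      have h3 : (if σ i then (1:ℝ) else -1) * u k x - (if σ i then (1:ℝ) else -1) * u k y ≤ 1 := by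
        by_cases h : σ i
        · rw [if_pos h]
          linarith [hu1 k x, hu0 k y]
        · rw [if_neg h]
          linarith [hu1 k y, hu0 k x]
      have heq : (if σ i then (1:ℝ) else -1) * u k x + (∑ j ∈ Finset.univ.erase i, (if σ j then (1:ℝ) else -1) * u k (ω j))
            - ((if σ i then (1:ℝ) else -1) * u k y + ∑ j ∈ Finset.univ.erase i, (if σ j then (1:ℝ) else -1) * u k (ω j))
          = (if σ i then (1:ℝ) else -1) * u k x - (if σ i then (1:ℝ) else -1) * u k y := by
        ring
      rw [heq]
      calc (1/(n:ℝ)) * ((if σ i then (1:ℝ) else -1) * u k x - (if σ i then (1:ℝ) else -1) * u k y)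
          ≤ (1/(n:ℝ)) * 1 := mul_le_mul_of_nonneg_left h3 (by positivity)
        _ = 1/(n:ℝ) := by ring
    have hle := le_ciSup hbdd k
    linarith [hdd, hle]
  have hR_diff : ∀ (i : Fin n) (ω : Fin n → X) (x y : X),
      R (Function.update ω i x) - R (Function.update ω i y) ≤ 1/(n:ℝ) := by
    intro i ω x y
    rw [hR]
    simp only
    rw [div_sub_div_same, div_le_iff₀ (by positivity : (0:ℝ) < (2:ℝ)^n)]
    rw [← Finset.sum_sub_distrib]
    calc ∑ σ : Fin n → Bool, ((⨆ k, (1/(n:ℝ)) * ∑ j, (if σ j then (1:ℝ) else -1) * u k (Function.update ω i x j))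
          - (⨆ k, (1/(n:ℝ)) * ∑ j, (if σ j then (1:ℝ) else -1) * u k (Function.update ω i y j)))
        ≤ ∑ _σ : Fin n → Bool, 1/(n:ℝ) := Finset.sum_le_sum (fun σ _ => hrad_diff σ i ω x y)
      _ = 2^n * (1/(n:ℝ)) := by
          rw [Finset.sum_const, Finset.card_univ, nsmul_eq_mul]
          congr 1
          simp [Fintype.card_fun]
      _ = 1/(n:ℝ) * 2^n := by ring
  have hF_diff : ∀ (i : Fin n) (ω : Fin n → X) (x y : X),
      F (Function.update ω i x) - F (Function.update ω i y) ≤ 3/(n:ℝ) := by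
    intro i ω x y
    show A (Function.update ω i x) - 2 * R (Function.update ω i x)
        - (A (Function.update ω i y) - 2 * R (Function.update ω i y)) ≤ 3/(n:ℝ)
    have h1 := hA_diff i ω x y
    have h2 := hR_diff i ω y x
    have h3 : (3:ℝ)/(n:ℝ) = 1/(n:ℝ) + 2 * (1/(n:ℝ)) := by ring
    rw [h3]
    linarith
  -- expectation of F is ≤ 0
  have hAint : Integrable A ν := integrable_of_bdd_ hAm.aestronglyMeasurable 1 hAb
  have hRint : Integrable R ν := integrable_of_bdd_ hRm.aestronglyMeasurable 1 hRb
  have hEF : ∫ ω, F ω ∂ν ≤ 0 := by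
    have h1 : ∫ ω, F ω ∂ν = ∫ ω, A ω ∂ν - 2 * ∫ ω, R ω ∂ν := by
      rw [hF]
      simp only
      rw [integral_sub hAint (hRint.const_mul 2), integral_const_mul]
    have h2 : ∫ ω, A ω ∂ν ≤ 2 * ∫ ω, R ω ∂ν := symmetrization D n hn u hum hu0 hu1
    rw [h1]
    linarith [h2]
  -- apply McDiarmid
  set t : ℝ := 3 * Real.sqrt (Real.log (2/δ) / (2*n)) with ht'
  have hlog : 0 < Real.log (2/δ) := by
    apply Real.log_pos
    rw [lt_div_iff₀ hδ.1]
    linarith [hδ.2]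
  have ht0 : 0 < t := by
    rw [ht']
    have : 0 < Real.sqrt (Real.log (2/δ) / (2*n)) := Real.sqrt_pos.2 (by positivity)
    linarith
  have htail := mcdiarmid_tail D n hn F hFm 3 (by norm_num) hFb (3/(n:ℝ)) (by positivity)
    hF_diff t ht0
  rw [← hν] at htail
  -- compute the exponent
  have hexp : -2*t^2/((n:ℝ)*(3/(n:ℝ))^2) = -Real.log (2/δ) := by
    rw [ht', mul_pow, Real.sq_sqrt (le_of_lt (div_pos hlog (by positivity)))]
    field_simp
  have hexp2 : Real.exp (-2*t^2/((n:ℝ)*(3/(n:ℝ))^2)) = δ/2 := by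
    rw [hexp, Real.exp_neg, Real.exp_log (div_pos two_pos hδ.1)]
    field_simp
  rw [hexp2] at htail
  -- conclude
  set I : ℝ := ∫ ω, F ω ∂ν with hI
  set Bad : Set (Fin n → X) := {ω | t ≤ F ω - I} with hBad
  have hBadm : MeasurableSet Bad :=
    measurableSet_le measurable_const ((hFm.sub measurable_const))
  have hsub : Badᶜ ⊆ {ω | ∀ h ∈ Ht, ∫ x, h x ∂D ≤
      (1 / (n : ℝ)) * ∑ i, h (ω i) + 2 * radS ω Ht + 3 * Real.sqrt (Real.log (2 / δ) / (2 * n))} := by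
    intro ω hω
    rw [Set.mem_compl_iff, hBad, Set.mem_setOf_eq, not_le] at hω
    intro h hh
    rw [hu] at hh
    obtain ⟨k, rfl⟩ := hh
    rw [hradSR ω]
    have hAle : Ek k - emp ω k ≤ A ω := by
      have hbdd : BddAbove (Set.range (fun k' => Ek k' - emp ω k')) := by
        refine ⟨1, ?_⟩
        rintro v ⟨k', rfl⟩
        have := (hEkb k').2
        have := (hempb ω k').1
        simp only
        linarith
      rw [hA]
      exact le_ciSup hbdd k
    have hFω : F ω < t := by linarith [hEF]
    have : A ω < t + 2 * R ω := by
      rw [hF] at hFω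
      simp only at hFω
      linarith
    show Ek k ≤ emp ω k + 2 * R ω + t
    linarith
  have hcompl : ν Badᶜ = 1 - ν Bad := by
    rw [measure_compl hBadm (measure_lt_top _ _).ne, measure_univ]
  calc ENNReal.ofReal (1 - δ) ≤ 1 - ENNReal.ofReal (δ/2) := by
        apply ENNReal.le_sub_of_add_le_right ENNReal.ofReal_ne_top
        rw [← ENNReal.ofReal_add (by linarith [hδ.2]) (by linarith [hδ.1])]
        calc ENNReal.ofReal (1 - δ + δ/2) ≤ ENNReal.ofReal 1 :=
              ENNReal.ofReal_le_ofReal (by linarith [hδ.1])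
          _ = 1 := ENNReal.ofReal_one
    _ ≤ 1 - ν Bad := tsub_le_tsub_left htail 1
    _ = ν Badᶜ := hcompl.symm
    _ ≤ _ := measure_mono hsub
end
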